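/- arXiv:1505.08083 — 4 statements merged into one kernel-verified Lean document; each statement's English description precedes it below -/
import Mathlib

section
/- Let (A,φ) be a noncommutative probability space and let U, V ∈ A be unitaries which are *-free. If V is a Haar unitary, then UV and VU are Haar unitaries: φ((UV)^k) = 0 = φ(((UV)*)^k) and φ((VU)^k) = 0 = φ(((VU)*)^k) for all k ≥ 1. (This is the free case of the absorption property of the Haar state on the unitary dual group U⟨1⟩.) -/
noncomputable section

/-- A state on a unital `⋆`-algebra over `ℂ`. -/
def IsState {A : Type} [Ring A] [Algebra ℂ A] [StarRing A]
    (φ : A →ₗ[ℂ] ℂ) : Prop :=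
  φ 1 = 1 ∧ ∀ a : A, 0 ≤ (φ (star a * a)).re ∧ (φ (star a * a)).im = 0

/-- Two subsets `S`, `T` of a noncommutative probability space are free with respect
to `φ`: every nonempty alternating product of centered elements of `S` and `T`
is centered. -/
def IsFreePair {A : Type} [Ring A] [Algebra ℂ A] [StarRing A]
    (φ : A →ₗ[ℂ] ℂ) (S T : Set A) : Prop :=
  ∀ l : List (A × Bool), l ≠ [] →
    l.Chain' (fun p q => p.2 ≠ q.2) →
    (∀ p ∈ l, (if p.2 then p.1 ∈ S else p.1 ∈ T) ∧ φ p.1 = 0) →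
    φ (l.map Prod.fst).prod = 0

section Aux

variable {A : Type} [Ring A] [Algebra ℂ A] [StarRing A]
variable {φ : A →ₗ[ℂ] ℂ} {S T : Set A} {U V : A}

private lemma prod_cons_rev (a : A × Bool) (r : List (A × Bool)) :
    (((a :: r).reverse.map Prod.fst).prod) = (r.reverse.map Prod.fst).prod * a.1 := by
  simp

private lemma free_rev (hfree : IsFreePair φ S T) (r : List (A × Bool)) (hne : r ≠ [])
    (hchain : r.Chain' (fun p q => q.2 ≠ p.2))
    (hmem : ∀ p ∈ r, (if p.2 then p.1 ∈ S else p.1 ∈ T) ∧ φ p.1 = 0) :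
    φ ((r.reverse.map Prod.fst).prod) = 0 := by
  apply hfree r.reverse (by simpa using hne)
  · exact List.isChain_reverse.mpr hchain
  · intro p hp; exact hmem p (List.mem_reverse.mp hp)

end Aux

section Aux2
set_option linter.unusedSectionVars false

variable {A : Type} [Ring A] [Algebra ℂ A] [StarRing A]
variable {φ : A →ₗ[ℂ] ℂ} {S T : Set A} {U V : A}

private lemma key1 (hφ1 : φ 1 = 1) (hfree : IsFreePair φ S T)
    (hUS : U - φ U • 1 ∈ S)
    (hV : ∀ n : ℕ, 1 ≤ n → V ^ n ∈ T ∧ φ (V ^ n) = 0) :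
    ∀ k n (r : List (A × Bool)),
      r.Chain' (fun p q => q.2 ≠ p.2) →
      (∀ p ∈ r, (if p.2 then p.1 ∈ S else p.1 ∈ T) ∧ φ p.1 = 0) →
      (∀ p ∈ r.head?, p.2 = true) →
      (n = 0 → r = []) →
      (k = 0 → 1 ≤ n) →
      φ ((r.reverse.map Prod.fst).prod * V ^ n * (U * V) ^ k) = 0 := by
  have hUc : φ (U - φ U • 1) = 0 := by
    simp [map_sub, map_smul, hφ1, smul_eq_mul]
  intro k
  induction k with
  | zero =>
    intro n r hchain hmem hhead hn0 hk0
    have hn := hk0 rfl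
    rw [pow_zero, mul_one, ← prod_cons_rev (V ^ n, false) r]
    apply free_rev hfree _ (by simp)
    · exact List.isChain_cons.mpr ⟨fun b hb => by simp [hhead b hb], hchain⟩
    · intro p hp
      rcases List.mem_cons.mp hp with rfl | hp
      · simpa using hV n hn
      · exact hmem p hp
  | succ k ih =>
    intro n r hchain hmem hhead hn0 hk0
    set x := (r.reverse.map Prod.fst).prod with hx
    have hexp : x * V ^ n * (U * V) ^ (k + 1)
        = (x * V ^ n * (U - φ U • 1)) * V ^ 1 * (U * V) ^ k
          + φ U • (x * V ^ (n + 1) * (U * V) ^ k) := by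
      rw [pow_succ']
      simp only [sub_mul, smul_mul_assoc, mul_sub, mul_smul_comm, one_mul, mul_one,
        pow_one, pow_succ, pow_zero, mul_assoc]
      abel
    rw [hexp, map_add, map_smul]
    have h2 : φ (x * V ^ (n + 1) * (U * V) ^ k) = 0 :=
      ih (n + 1) r hchain hmem hhead (by omega) (by omega)
    rw [h2, smul_zero, add_zero]
    rcases Nat.eq_zero_or_pos n with hn | hn
    · have hr : r = [] := hn0 hn
      subst hr; subst hn
      have h1 := ih 1 [(U - φ U • 1, true)] (List.isChain_singleton _) ?_ (by simp) (by simp) (by simp)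
      · simpa [hx] using h1
      · intro p hp
        simp only [List.mem_singleton] at hp
        subst hp
        exact ⟨by simpa using hUS, hUc⟩
    · have h1 := ih 1 ((U - φ U • 1, true) :: (V ^ n, false) :: r) ?_ ?_ (by simp) (by simp) (by simp)
      · rw [prod_cons_rev, prod_cons_rev] at h1
        exact h1
      · refine List.isChain_cons.mpr ⟨?_, List.isChain_cons.mpr ⟨fun b hb => by simp [hhead b hb], hchain⟩⟩
        intro b hb
        obtain rfl : (V ^ n, false) = b := by simpa using hb
        simp
      · intro p hp
        rcases List.mem_cons.mp hp with rfl | hp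
        · exact ⟨by simpa using hUS, hUc⟩
        rcases List.mem_cons.mp hp with rfl | hp
        · simpa using hV n hn
        · exact hmem p hp

private lemma key2 (hφ1 : φ 1 = 1) (hfree : IsFreePair φ S T)
    (hUS : U - φ U • 1 ∈ S)
    (hV : ∀ n : ℕ, 1 ≤ n → V ^ n ∈ T ∧ φ (V ^ n) = 0) :
    ∀ k n (r : List (A × Bool)),
      r.Chain' (fun p q => q.2 ≠ p.2) →
      (∀ p ∈ r, (if p.2 then p.1 ∈ S else p.1 ∈ T) ∧ φ p.1 = 0) →
      (∀ p ∈ r.head?, p.2 = true) →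
      (n = 0 → r = []) →
      (k = 0 → 1 ≤ n) →
      φ ((r.reverse.map Prod.fst).prod * V ^ n * (U * V) ^ k * U) = 0 := by
  have hUc : φ (U - φ U • 1) = 0 := by
    simp [map_sub, map_smul, hφ1, smul_eq_mul]
  intro k
  induction k with
  | zero =>
    intro n r hchain hmem hhead hn0 hk0
    have hn := hk0 rfl
    set x := (r.reverse.map Prod.fst).prod with hx
    have hexp : x * V ^ n * (U * V) ^ 0 * U
        = x * V ^ n * (U - φ U • 1) + φ U • (x * V ^ n * (U * V) ^ 0) := by
      simp only [pow_zero, mul_one, mul_sub, mul_smul_comm]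
      abel
    rw [hexp, map_add, map_smul,
      key1 hφ1 hfree hUS hV 0 n r hchain hmem hhead hn0 hk0, smul_zero, add_zero]
    rw [← prod_cons_rev (V ^ n, false) r, ← prod_cons_rev (U - φ U • 1, true) _]
    apply free_rev hfree _ (by simp)
    · refine List.isChain_cons.mpr ⟨?_, List.isChain_cons.mpr ⟨fun b hb => by simp [hhead b hb], hchain⟩⟩
      intro b hb
      obtain rfl : (V ^ n, false) = b := by simpa using hb
      simp
    · intro p hp
      rcases List.mem_cons.mp hp with rfl | hp
      · exact ⟨by simpa using hUS, hUc⟩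
      rcases List.mem_cons.mp hp with rfl | hp
      · simpa using hV n hn
      · exact hmem p hp
  | succ k ih =>
    intro n r hchain hmem hhead hn0 hk0
    set x := (r.reverse.map Prod.fst).prod with hx
    have hexp : x * V ^ n * (U * V) ^ (k + 1) * U
        = (x * V ^ n * (U - φ U • 1)) * V ^ 1 * (U * V) ^ k * U
          + φ U • (x * V ^ (n + 1) * (U * V) ^ k * U) := by
      rw [pow_succ']
      simp only [sub_mul, smul_mul_assoc, mul_sub, mul_smul_comm, one_mul, mul_one,
        pow_one, pow_succ, pow_zero, mul_assoc]
      abel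
    rw [hexp, map_add, map_smul]
    have h2 : φ (x * V ^ (n + 1) * (U * V) ^ k * U) = 0 :=
      ih (n + 1) r hchain hmem hhead (by omega) (by omega)
    rw [h2, smul_zero, add_zero]
    rcases Nat.eq_zero_or_pos n with hn | hn
    · have hr : r = [] := hn0 hn
      subst hr; subst hn
      have h1 := ih 1 [(U - φ U • 1, true)] (List.isChain_singleton _) ?_ (by simp) (by simp) (by simp)
      · simpa [hx] using h1
      · intro p hp
        simp only [List.mem_singleton] at hp
        subst hp
        exact ⟨by simpa using hUS, hUc⟩
    · have h1 := ih 1 ((U - φ U • 1, true) :: (V ^ n, false) :: r) ?_ ?_ (by simp) (by simp) (by simp)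
      · rw [prod_cons_rev, prod_cons_rev] at h1
        exact h1
      · refine List.isChain_cons.mpr ⟨?_, List.isChain_cons.mpr ⟨fun b hb => by simp [hhead b hb], hchain⟩⟩
        intro b hb
        obtain rfl : (V ^ n, false) = b := by simpa using hb
        simp
      · intro p hp
        rcases List.mem_cons.mp hp with rfl | hp
        · exact ⟨by simpa using hUS, hUc⟩
        rcases List.mem_cons.mp hp with rfl | hp
        · simpa using hV n hn
        · exact hmem p hp

private lemma phiUV (hφ1 : φ 1 = 1) (hfree : IsFreePair φ S T)
    (hUS : U - φ U • 1 ∈ S)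
    (hV : ∀ n : ℕ, 1 ≤ n → V ^ n ∈ T ∧ φ (V ^ n) = 0)
    (k : ℕ) (hk : 1 ≤ k) : φ ((U * V) ^ k) = 0 := by
  have := key1 hφ1 hfree hUS hV k 0 [] List.isChain_nil (by simp) (by simp) (by simp) (by omega)
  simpa using this

private lemma vu_pow (m : ℕ) : (V * U) ^ (m + 1) = V * (U * V) ^ m * U := by
  induction m with
  | zero => simp
  | succ m ih => rw [pow_succ, ih, pow_succ]; noncomm_ring

private lemma phiVU (hφ1 : φ 1 = 1) (hfree : IsFreePair φ S T)
    (hUS : U - φ U • 1 ∈ S)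
    (hV : ∀ n : ℕ, 1 ≤ n → V ^ n ∈ T ∧ φ (V ^ n) = 0)
    (k : ℕ) (hk : 1 ≤ k) : φ ((V * U) ^ k) = 0 := by
  obtain ⟨m, rfl⟩ : ∃ m, k = m + 1 := ⟨k - 1, by omega⟩
  rw [vu_pow]
  have := key2 hφ1 hfree hUS hV m 1 [] List.isChain_nil (by simp) (by simp) (by simp) (by simp)
  simpa using this

end Aux2

/-- `U` is a Haar unitary for the state `φ`. -/
def IsHaarUnitary {A : Type} [Ring A] [Algebra ℂ A] [StarRing A]
    (φ : A →ₗ[ℂ] ℂ) (V : A) : Prop :=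
  V ∈ unitary A ∧ ∀ k : ℕ, 1 ≤ k → φ (V ^ k) = 0 ∧ φ ((star V) ^ k) = 0

/-- If `U`, `V` are `*`-free unitaries in a noncommutative probability
space `(A, φ)` and `V` is a Haar unitary, then `UV` and `VU` are Haar unitaries. -/
theorem haar_unitary_absorbing
    (A : Type) [Ring A] [Algebra ℂ A] [StarRing A] [StarModule ℂ A]
    (φ : A →ₗ[ℂ] ℂ) (hφ : IsState φ)
    (U V : A) (hU : U ∈ unitary A) (hV : V ∈ unitary A)
    (hfree : IsFreePair φ
      ((StarAlgebra.adjoin ℂ {U} : StarSubalgebra ℂ A) : Set A)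
      ((StarAlgebra.adjoin ℂ {V} : StarSubalgebra ℂ A) : Set A))
    (hHaar : ∀ k : ℕ, 1 ≤ k → φ (V ^ k) = 0 ∧ φ ((star V) ^ k) = 0) :
    IsHaarUnitary φ (U * V) ∧ IsHaarUnitary φ (V * U) := by
  obtain ⟨hφ1, -⟩ := hφ
  have hUmem : U ∈ StarAlgebra.adjoin ℂ {U} := StarAlgebra.subset_adjoin ℂ {U} rfl
  have hVmem : V ∈ StarAlgebra.adjoin ℂ {V} := StarAlgebra.subset_adjoin ℂ {V} rfl
  have hUS : U - φ U • 1 ∈ ((StarAlgebra.adjoin ℂ {U} : StarSubalgebra ℂ A) : Set A) :=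
    sub_mem hUmem (SMulMemClass.smul_mem _ (one_mem _))
  have hUS' : star U - φ (star U) • 1 ∈ ((StarAlgebra.adjoin ℂ {U} : StarSubalgebra ℂ A) : Set A) :=
    sub_mem (star_mem hUmem) (SMulMemClass.smul_mem _ (one_mem _))
  have hVT : ∀ n : ℕ, 1 ≤ n →
      V ^ n ∈ ((StarAlgebra.adjoin ℂ {V} : StarSubalgebra ℂ A) : Set A) ∧ φ (V ^ n) = 0 :=
    fun n hn => ⟨pow_mem hVmem n, (hHaar n hn).1⟩
  have hVT' : ∀ n : ℕ, 1 ≤ n →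
      (star V) ^ n ∈ ((StarAlgebra.adjoin ℂ {V} : StarSubalgebra ℂ A) : Set A) ∧ φ ((star V) ^ n) = 0 :=
    fun n hn => ⟨pow_mem (star_mem hVmem) n, (hHaar n hn).2⟩
  refine ⟨⟨mul_mem hU hV, fun k hk => ⟨phiUV hφ1 hfree hUS hVT k hk, ?_⟩⟩,
    ⟨mul_mem hV hU, fun k hk => ⟨phiVU hφ1 hfree hUS hVT k hk, ?_⟩⟩⟩
  · rw [star_mul]
    exact phiVU hφ1 hfree hUS' hVT' k hk
  · rw [star_mul]
    exact phiUV hφ1 hfree hUS' hVT' k hk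
end
end

section
/- Let n ≥ 2. There is no state h on the Brown algebra U_n^nc such that h ⋆_F φ = h for every state φ on U_n^nc. In particular, there exists no free Haar state on U⟨n⟩, i.e. no state h with φ ⋆_F h = h = h ⋆_F φ for all states φ. -/
noncomputable section

/-- A tracial state. -/
def IsTracialState {A : Type} [Ring A] [Algebra ℂ A] [StarRing A]
    (φ : A →ₗ[ℂ] ℂ) : Prop :=
  IsState φ ∧ ∀ a b : A, φ (a * b) = φ (b * a)

/-- The Brown algebra `U_n^nc`: a unital `⋆`-algebra generated by `n²` elements
`u i j` subject to the unitarity relations, together with its universal property. -/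
structure BrownAlg (n : ℕ) where
  carrier : Type
  [ring : Ring carrier]
  [algebra : Algebra ℂ carrier]
  [starRing : StarRing carrier]
  [starModule : StarModule ℂ carrier]
  u : Fin n → Fin n → carrier
  rel_left : ∀ i j, (∑ k, star (u k i) * u k j) = if i = j then 1 else 0
  rel_right : ∀ i j, (∑ k, u i k * star (u j k)) = if i = j then 1 else 0
  universal : ∀ (C : Type) [Ring C] [Algebra ℂ C] [StarRing C] [StarModule ℂ C]
      (v : Fin n → Fin n → C),
      (∀ i j, (∑ k, star (v k i) * v k j) = if i = j then 1 else 0) →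
      (∀ i j, (∑ k, v i k * star (v j k)) = if i = j then 1 else 0) →
      ∃! f : carrier →⋆ₐ[ℂ] C, ∀ i j, f (u i j) = v i j

attribute [instance] BrownAlg.ring BrownAlg.algebra BrownAlg.starRing BrownAlg.starModule

/-- The free product (coproduct) of two unital `⋆`-algebras over `ℂ`,
presented through its universal property. -/
structure FreeProd (A B : Type) [Ring A] [Algebra ℂ A] [StarRing A]
    [Ring B] [Algebra ℂ B] [StarRing B] where
  carrier : Type
  [ring : Ring carrier]
  [algebra : Algebra ℂ carrier]
  [starRing : StarRing carrier]
  [starModule : StarModule ℂ carrier]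
  inl : A →⋆ₐ[ℂ] carrier
  inr : B →⋆ₐ[ℂ] carrier
  universal : ∀ (D : Type) [Ring D] [Algebra ℂ D] [StarRing D] [StarModule ℂ D]
      (f : A →⋆ₐ[ℂ] D) (g : B →⋆ₐ[ℂ] D),
      ∃! h : carrier →⋆ₐ[ℂ] D, (∀ a, h (inl a) = f a) ∧ (∀ b, h (inr b) = g b)

attribute [instance] FreeProd.ring FreeProd.algebra FreeProd.starRing FreeProd.starModule

namespace FreeProd

variable {A B : Type} [Ring A] [Algebra ℂ A] [StarRing A]
    [Ring B] [Algebra ℂ B] [StarRing B]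

/-- The canonical embedding of a tagged element into the free product. -/
def embed (F : FreeProd A B) : A ⊕ B → F.carrier :=
  Sum.elim (fun a => F.inl a) (fun b => F.inr b)

/-- `Ψ` is the free product functional of `φ` and `ψ` on the free product `F`:
it is unital, restricts to `φ` and `ψ` on the two legs, and vanishes on alternating
products of centered elements. -/
def IsFreeProdFunctional (F : FreeProd A B) (φ : A →ₗ[ℂ] ℂ) (ψ : B →ₗ[ℂ] ℂ)
    (Ψ : F.carrier →ₗ[ℂ] ℂ) : Prop :=
  Ψ 1 = 1 ∧ (∀ a, Ψ (F.inl a) = φ a) ∧ (∀ b, Ψ (F.inr b) = ψ b) ∧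
  ∀ l : List (A ⊕ B), l ≠ [] →
    l.Chain' (fun x y => x.isLeft ≠ y.isLeft) →
    (∀ x ∈ l, Sum.elim (fun a => φ a = 0) (fun b => ψ b = 0) x) →
    Ψ ((l.map F.embed).prod) = 0

end FreeProd

section ProdFunctionals

variable {A : Type} [Ring A] [Algebra ℂ A] [StarRing A]

/-- `Ψ` is the tensor (tensor-independent) product functional of `φ` and `ψ`
relative to the counit `δc`. -/
def IsTensorProdFunctional (F : FreeProd A A) (δc : A →⋆ₐ[ℂ] ℂ)
    (φ ψ : A →ₗ[ℂ] ℂ) (Ψ : F.carrier →ₗ[ℂ] ℂ) : Prop :=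
  Ψ 1 = 1 ∧
  ∀ l : List (A ⊕ A), l ≠ [] →
    l.Chain' (fun x y => x.isLeft ≠ y.isLeft) →
    (∀ x ∈ l, Sum.elim (fun a => δc a = 0) (fun b => δc b = 0) x) →
    Ψ ((l.map F.embed).prod) =
      φ (l.filterMap Sum.getLeft?).prod * ψ (l.filterMap Sum.getRight?).prod

/-- `Ψ` is the boolean product functional of `φ` and `ψ` relative to the counit `δc`. -/
def IsBooleanProdFunctional (F : FreeProd A A) (δc : A →⋆ₐ[ℂ] ℂ)
    (φ ψ : A →ₗ[ℂ] ℂ) (Ψ : F.carrier →ₗ[ℂ] ℂ) : Prop :=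
  Ψ 1 = 1 ∧
  ∀ l : List (A ⊕ A), l ≠ [] →
    l.Chain' (fun x y => x.isLeft ≠ y.isLeft) →
    (∀ x ∈ l, Sum.elim (fun a => δc a = 0) (fun b => δc b = 0) x) →
    Ψ ((l.map F.embed).prod) = (l.map (Sum.elim (fun a => φ a) (fun b => ψ b))).prod

/-- `Ψ` is the monotone product functional of `φ` and `ψ` relative to the counit `δc`. -/
def IsMonotoneProdFunctional (F : FreeProd A A) (δc : A →⋆ₐ[ℂ] ℂ)
    (φ ψ : A →ₗ[ℂ] ℂ) (Ψ : F.carrier →ₗ[ℂ] ℂ) : Prop :=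
  Ψ 1 = 1 ∧
  ∀ l : List (A ⊕ A), l ≠ [] →
    l.Chain' (fun x y => x.isLeft ≠ y.isLeft) →
    (∀ x ∈ l, Sum.elim (fun a => δc a = 0) (fun b => δc b = 0) x) →
    Ψ ((l.map F.embed).prod) =
      φ (l.filterMap Sum.getLeft?).prod * ((l.filterMap Sum.getRight?).map (fun b => ψ b)).prod

/-- `Ψ` is the anti-monotone product functional of `φ` and `ψ` relative to the counit `δc`. -/
def IsAntiMonotoneProdFunctional (F : FreeProd A A) (δc : A →⋆ₐ[ℂ] ℂ)
    (φ ψ : A →ₗ[ℂ] ℂ) (Ψ : F.carrier →ₗ[ℂ] ℂ) : Prop :=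
  Ψ 1 = 1 ∧
  ∀ l : List (A ⊕ A), l ≠ [] →
    l.Chain' (fun x y => x.isLeft ≠ y.isLeft) →
    (∀ x ∈ l, Sum.elim (fun a => δc a = 0) (fun b => δc b = 0) x) →
    Ψ ((l.map F.embed).prod) =
      ((l.filterMap Sum.getLeft?).map (fun a => φ a)).prod * ψ (l.filterMap Sum.getRight?).prod

end ProdFunctionals

namespace BrownAlg

variable {n : ℕ}

/-- `Δ` is the coproduct of the unitary dual group `U⟨n⟩`. -/
def IsCoprod (U : BrownAlg n) (F : FreeProd U.carrier U.carrier)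
    (Δ : U.carrier →⋆ₐ[ℂ] F.carrier) : Prop :=
  ∀ i j, Δ (U.u i j) = ∑ k, F.inl (U.u i k) * F.inr (U.u k j)

/-- `δc` is the counit of the unitary dual group `U⟨n⟩`. -/
def IsCounit (U : BrownAlg n) (δc : U.carrier →⋆ₐ[ℂ] ℂ) : Prop :=
  ∀ i j, δc (U.u i j) = if i = j then 1 else 0

/-- `Σ` is the antipode of the unitary dual group `U⟨n⟩`. -/
def IsAntipode (U : BrownAlg n) (Sa : U.carrier →⋆ₐ[ℂ] U.carrier) : Prop :=
  ∀ i j, Sa (U.u i j) = star (U.u j i)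

/-- `χ = φ ⋆_F ψ`, the free convolution of the states `φ` and `ψ` on `U⟨n⟩`. -/
def FreeConv (U : BrownAlg n) (F : FreeProd U.carrier U.carrier)
    (Δ : U.carrier →⋆ₐ[ℂ] F.carrier) (φ ψ χ : U.carrier →ₗ[ℂ] ℂ) : Prop :=
  ∃ Ψ : F.carrier →ₗ[ℂ] ℂ, F.IsFreeProdFunctional φ ψ Ψ ∧ ∀ a, Ψ (Δ a) = χ a

/-- `χ = φ ⋆_T ψ`, the tensor convolution of the states `φ` and `ψ` on `U⟨n⟩`. -/
def TensorConv (U : BrownAlg n) (F : FreeProd U.carrier U.carrier)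
    (Δ : U.carrier →⋆ₐ[ℂ] F.carrier) (δc : U.carrier →⋆ₐ[ℂ] ℂ)
    (φ ψ χ : U.carrier →ₗ[ℂ] ℂ) : Prop :=
  ∃ Ψ : F.carrier →ₗ[ℂ] ℂ, IsTensorProdFunctional F δc φ ψ Ψ ∧ ∀ a, Ψ (Δ a) = χ a

/-- `χ = φ ⋆_B ψ`, the boolean convolution. -/
def BooleanConv (U : BrownAlg n) (F : FreeProd U.carrier U.carrier)
    (Δ : U.carrier →⋆ₐ[ℂ] F.carrier) (δc : U.carrier →⋆ₐ[ℂ] ℂ)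
    (φ ψ χ : U.carrier →ₗ[ℂ] ℂ) : Prop :=
  ∃ Ψ : F.carrier →ₗ[ℂ] ℂ, IsBooleanProdFunctional F δc φ ψ Ψ ∧ ∀ a, Ψ (Δ a) = χ a

/-- `χ = φ ⋆_M ψ`, the monotone convolution. -/
def MonotoneConv (U : BrownAlg n) (F : FreeProd U.carrier U.carrier)
    (Δ : U.carrier →⋆ₐ[ℂ] F.carrier) (δc : U.carrier →⋆ₐ[ℂ] ℂ)
    (φ ψ χ : U.carrier →ₗ[ℂ] ℂ) : Prop :=
  ∃ Ψ : F.carrier →ₗ[ℂ] ℂ, IsMonotoneProdFunctional F δc φ ψ Ψ ∧ ∀ a, Ψ (Δ a) = χ a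

/-- `χ = φ ⋆_AM ψ`, the anti-monotone convolution. -/
def AntiMonotoneConv (U : BrownAlg n) (F : FreeProd U.carrier U.carrier)
    (Δ : U.carrier →⋆ₐ[ℂ] F.carrier) (δc : U.carrier →⋆ₐ[ℂ] ℂ)
    (φ ψ χ : U.carrier →ₗ[ℂ] ℂ) : Prop :=
  ∃ Ψ : F.carrier →ₗ[ℂ] ℂ, IsAntiMonotoneProdFunctional F δc φ ψ Ψ ∧ ∀ a, Ψ (Δ a) = χ a

end BrownAlg

namespace NoHaar

open Matrix

abbrev M2 := Matrix (Fin 2) (Fin 2) ℂ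

def sw {n : ℕ} (p q : Fin n) : (Fin n × Fin 2) ≃ (Fin n × Fin 2) :=
  Equiv.swap (p, 1) (q, 0)

def vmat {n : ℕ} (p q : Fin n) (i j : Fin n) : M2 :=
  Matrix.of fun a b => if sw p q (j, b) = (i, a) then 1 else 0

lemma sum_ite_ite {α : Type*} [Fintype α] [DecidableEq α] (s t : α) :
    (∑ x : α, (if s = x then (1:ℂ) else 0) * (if t = x then 1 else 0))
      = if s = t then 1 else 0 := by
  rw [Finset.sum_eq_single s]
  · simp [eq_comm]
  · intro x _ hx; simp [Ne.symm hx]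
  · simp

lemma vmat_rel_left {n : ℕ} (p q : Fin n) (i j : Fin n) :
    (∑ k, star (vmat p q k i) * vmat p q k j) = if i = j then 1 else 0 := by
  ext a b
  simp only [Matrix.sum_apply, Matrix.mul_apply, Matrix.star_apply, vmat, Matrix.of_apply]
  rw [← Fintype.sum_prod_type']
  have hst : ∀ x : Fin n × Fin 2,
      star (if sw p q (i, a) = x then (1:ℂ) else 0) = (if sw p q (i, a) = x then (1:ℂ) else 0) := by
    intro x; rcases em (sw p q (i,a) = x) with h|h <;> simp [h]
  calc (∑ x : Fin n × Fin 2,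
        star (if sw p q (i, a) = x then (1:ℂ) else 0) * (if sw p q (j, b) = x then 1 else 0))
      = ∑ x : Fin n × Fin 2,
        (if sw p q (i, a) = x then (1:ℂ) else 0) * (if sw p q (j, b) = x then 1 else 0) := by
        exact Finset.sum_congr rfl fun x _ => by rw [hst]
    _ = if sw p q (i, a) = sw p q (j, b) then 1 else 0 := sum_ite_ite _ _
    _ = (if i = j then (1:M2) else 0) a b := by
        simp only [Equiv.apply_eq_iff_eq, Prod.mk.injEq]
        rcases em (i = j) with h|h
        · rcases em (a = b) with h2|h2 <;> simp [h, h2, Matrix.one_apply]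
        · simp [h]

lemma vmat_rel_right {n : ℕ} (p q : Fin n) (i j : Fin n) :
    (∑ k, vmat p q i k * star (vmat p q j k)) = if i = j then 1 else 0 := by
  ext a b
  simp only [Matrix.sum_apply, Matrix.mul_apply, Matrix.star_apply, vmat, Matrix.of_apply]
  rw [← Fintype.sum_prod_type']
  have key : (∑ x : Fin n × Fin 2,
      (if sw p q x = (i, a) then (1:ℂ) else 0) * star (if sw p q x = (j, b) then (1:ℂ) else 0))
      = if (i, a) = ((j : Fin n), (b : Fin 2)) then 1 else 0 := by
    rw [← Equiv.sum_comp (sw p q).symm]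
    simp only [Equiv.apply_symm_apply]
    have hst : ∀ x : Fin n × Fin 2,
        star (if x = (j, b) then (1:ℂ) else 0) = (if x = (j, b) then (1:ℂ) else 0) := by
      intro x; rcases em (x = (j,b)) with h|h <;> simp [h]
    calc (∑ x : Fin n × Fin 2,
          (if x = (i, a) then (1:ℂ) else 0) * star (if x = (j, b) then (1:ℂ) else 0))
        = ∑ x : Fin n × Fin 2,
          (if (i, a) = x then (1:ℂ) else 0) * (if (j, b) = x then 1 else 0) := by
          refine Finset.sum_congr rfl fun x _ => ?_
          rw [hst]; simp [eq_comm]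
      _ = _ := sum_ite_ite _ _
  calc _ = if (i, a) = ((j: Fin n), (b : Fin 2)) then (1:ℂ) else 0 := key
    _ = (if i = j then (1:M2) else 0) a b := by
        simp only [Prod.mk.injEq]
        rcases em (i = j) with h|h
        · rcases em (a = b) with h2|h2 <;> simp [h, h2, Matrix.one_apply]
        · simp [h]

lemma vmat_val {n : ℕ} (p q : Fin n) (hpq : p ≠ q) (k l : Fin n) :
    (vmat p q k p * star (vmat p q l p)) 0 0 =
      (if k = p ∧ l = p then (1:ℂ) else 0) + (if k = q ∧ l = q then 1 else 0) := by
  have h0 : sw p q (p, 0) = (p, 0) := by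
    apply Equiv.swap_apply_of_ne_of_ne
    · simp
    · simp [hpq]
  have h1 : sw p q (p, 1) = (q, 0) := Equiv.swap_apply_left _ _
  simp only [Matrix.mul_apply, Matrix.star_apply, vmat, Matrix.of_apply]
  rw [Fin.sum_univ_two]
  rw [h0, h1]
  have hst : ∀ (P : Prop) [Decidable P], star (if P then (1:ℂ) else 0) = (if P then (1:ℂ) else 0) := by
    intro P _; rcases em P with h|h <;> simp [h]
  rw [hst, hst]
  simp only [Prod.mk.injEq, and_true]
  rcases em (k = p) with h|h <;> rcases em (l = p) with h2|h2 <;>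
    rcases em (k = q) with h3|h3 <;> rcases em (l = q) with h4|h4 <;>
    simp [h, h2, h3, h4, hpq, hpq.symm, eq_comm] <;> aesop

end NoHaar

namespace NoHaar

/-- evaluation at entry (0,0) as a linear map -/
def entry00 : M2 →ₗ[ℂ] ℂ where
  toFun X := X 0 0
  map_add' X Y := rfl
  map_smul' c X := rfl

lemma entry00_apply (X : M2) : entry00 X = X 0 0 := rfl

lemma isState_entry00_comp {A : Type} [Ring A] [Algebra ℂ A] [StarRing A]
    (f : A →⋆ₐ[ℂ] M2) : IsState (entry00.comp f.toAlgHom.toLinearMap) := by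
  constructor
  · simp [entry00_apply, Matrix.one_apply]
  · intro a
    have : (entry00.comp f.toAlgHom.toLinearMap) (star a * a)
        = ∑ c, ((Complex.normSq ((f a) c 0) : ℝ) : ℂ) := by
      simp only [entry00_apply, LinearMap.comp_apply, LinearMap.coe_mk, AddHom.coe_mk,
        AlgHom.toLinearMap_apply, StarAlgHom.coe_toAlgHom, map_mul, map_star]
      rw [Matrix.mul_apply]
      refine Finset.sum_congr rfl fun c _ => ?_
      rw [Matrix.star_apply]
      rw [Complex.star_def, ← Complex.normSq_eq_conj_mul_self]
    rw [this]
    constructor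
    · rw [Complex.re_sum]
      apply Finset.sum_nonneg
      intro c _
      simp [Complex.normSq_nonneg]
    · rw [Complex.im_sum]
      apply Finset.sum_eq_zero
      intro c _
      simp

end NoHaar

namespace NoHaar

variable {A : Type} [Ring A] [Algebra ℂ A] [StarRing A]

lemma sandwich (F : FreeProd A A) (h φ : A →ₗ[ℂ] ℂ) (Ψ : F.carrier →ₗ[ℂ] ℂ)
    (HΨ : F.IsFreeProdFunctional h φ Ψ) (hh1 : h 1 = 1) (hφ1 : φ 1 = 1)
    (a x b : A) :
    Ψ (F.inl a * F.inr x * F.inl b) = φ x * h (a * b) := by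
  obtain ⟨hΨ1, hΨl, hΨr, hΨ0⟩ := HΨ
  set a' := a - h a • (1 : A) with ha'
  set x' := x - φ x • (1 : A) with hx'
  set b' := b - h b • (1 : A) with hb'
  have ca : h a' = 0 := by rw [ha']; rw [map_sub, map_smul]; simp [hh1]
  have cx : φ x' = 0 := by rw [hx']; rw [map_sub, map_smul]; simp [hφ1]
  have cb : h b' = 0 := by rw [hb']; rw [map_sub, map_smul]; simp [hh1]
  have Z3 : Ψ (F.inl a' * (F.inr x' * F.inl b')) = 0 := by
    have := hΨ0 [Sum.inl a', Sum.inr x', Sum.inl b'] (by simp)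
      (by simp [List.Chain', List.isChain_cons_cons]) ?_
    · simpa [FreeProd.embed, mul_assoc] using this
    · intro s hs
      simp only [List.mem_cons, List.mem_singleton, List.not_mem_nil, or_false] at hs
      rcases hs with rfl | rfl | rfl
      · simpa using ca
      · simpa using cx
      · simpa using cb
  have Z2a : Ψ (F.inl a' * F.inr x') = 0 := by
    have := hΨ0 [Sum.inl a', Sum.inr x'] (by simp)
      (by simp [List.Chain', List.isChain_cons_cons]) ?_
    · simpa [FreeProd.embed, mul_assoc] using this
    · intro s hs
      simp only [List.mem_cons, List.mem_singleton, List.not_mem_nil, or_false] at hs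
      rcases hs with rfl | rfl
      · simpa using ca
      · simpa using cx
  have Z2b : Ψ (F.inr x' * F.inl b') = 0 := by
    have := hΨ0 [Sum.inr x', Sum.inl b'] (by simp)
      (by simp [List.Chain', List.isChain_cons_cons]) ?_
    · simpa [FreeProd.embed, mul_assoc] using this
    · intro s hs
      simp only [List.mem_cons, List.mem_singleton, List.not_mem_nil, or_false] at hs
      rcases hs with rfl | rfl
      · simpa using cx
      · simpa using cb
  have ea : F.inl a = F.inl a' + h a • (1 : F.carrier) := by
    rw [ha', map_sub, map_smul, map_one]; abel
  have ex : F.inr x = F.inr x' + φ x • (1 : F.carrier) := by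
    rw [hx', map_sub, map_smul, map_one]; abel
  have eb : F.inl b = F.inl b' + h b • (1 : F.carrier) := by
    rw [hb', map_sub, map_smul, map_one]; abel
  have hab : h (a' * b') = h (a * b) - h a * h b := by
    have e1 : a' * b' = a * b' - h a • b' := by
      rw [ha', sub_mul, smul_mul_assoc, one_mul]
    have e2 : a * b' = a * b - h b • a := by
      rw [hb', mul_sub, mul_smul_comm, mul_one]
    rw [e1, map_sub, map_smul, cb, e2, map_sub, map_smul]
    simp [smul_eq_mul]
    ring
  rw [ea, ex, eb]
  simp only [add_mul, mul_add, smul_mul_assoc, mul_smul_comm, one_mul, mul_one,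
    map_add, map_smul, smul_eq_mul]
  have inlmul : Ψ (F.inl a' * F.inl b') = h (a' * b') := by rw [← map_mul]; exact hΨl _
  have l1 : Ψ (F.inl a') = 0 := by rw [hΨl]; exact ca
  have l2 : Ψ (F.inr x') = 0 := by rw [hΨr]; exact cx
  have l3 : Ψ (F.inl b') = 0 := by rw [hΨl]; exact cb
  rw [← mul_assoc] at Z3
  rw [Z3, Z2a, Z2b, inlmul, l1, l2, l3, hΨ1, hab]
  ring

end NoHaar

namespace NoHaar

lemma inv_eq {n : ℕ} (U : BrownAlg n) (F : FreeProd U.carrier U.carrier)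
    (Δ : U.carrier →⋆ₐ[ℂ] F.carrier) (HΔ : U.IsCoprod F Δ)
    (h φ : U.carrier →ₗ[ℂ] ℂ) (hh1 : h 1 = 1) (hφ1 : φ 1 = 1)
    (Hconv : U.FreeConv F Δ h φ h) (r i j : Fin n) :
    h (U.u r i * star (U.u r j)) =
      ∑ k, ∑ l, φ (U.u k i * star (U.u l j)) * h (U.u r k * star (U.u r l)) := by
  obtain ⟨Ψ, HΨ, HΔΨ⟩ := Hconv
  rw [← HΔΨ (U.u r i * star (U.u r j))]
  rw [map_mul, map_star, HΔ r i, HΔ r j]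
  have estar : star (∑ l, F.inl (U.u r l) * F.inr (U.u l j))
      = ∑ l, F.inr (star (U.u l j)) * F.inl (star (U.u r l)) := by
    rw [star_sum]
    refine Finset.sum_congr rfl fun l _ => ?_
    rw [star_mul, map_star, map_star]
  rw [estar, Finset.sum_mul_sum]
  rw [map_sum]
  refine Finset.sum_congr rfl fun k _ => ?_
  rw [map_sum]
  refine Finset.sum_congr rfl fun l _ => ?_
  have rearr : (F.inl (U.u r k) * F.inr (U.u k i)) *
      (F.inr (star (U.u l j)) * F.inl (star (U.u r l)))
      = F.inl (U.u r k) * F.inr (U.u k i * star (U.u l j)) * F.inl (star (U.u r l)) := by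
    rw [map_mul, mul_assoc, ← mul_assoc (F.inr (U.u k i)), ← mul_assoc]
  rw [rearr, sandwich F h φ Ψ HΨ hh1 hφ1]

lemma dsum {n : ℕ} (N : Fin n → Fin n → ℂ) (c : Fin n) :
    (∑ k, ∑ l, (if k = c ∧ l = c then (1:ℂ) else 0) * N k l) = N c c := by
  rw [Finset.sum_eq_single c]
  · rw [Finset.sum_eq_single c]
    · simp
    · intro x _ hx; simp [hx]
    · simp
  · intro x _ hx; apply Finset.sum_eq_zero; intro l _; simp [hx]
  · simp

end NoHaar

open NoHaar in
theorem no_free_haar_state' (n : ℕ) (hn : 2 ≤ n) (U : BrownAlg n)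
    (F : FreeProd U.carrier U.carrier) (Δ : U.carrier →⋆ₐ[ℂ] F.carrier)
    (hΔ : U.IsCoprod F Δ) :
    (¬ ∃ h : U.carrier →ₗ[ℂ] ℂ, IsState h ∧
        ∀ φ : U.carrier →ₗ[ℂ] ℂ, IsState φ → U.FreeConv F Δ h φ h) ∧
    (¬ ∃ h : U.carrier →ₗ[ℂ] ℂ, IsState h ∧
        ∀ φ : U.carrier →ₗ[ℂ] ℂ, IsState φ →
          U.FreeConv F Δ φ h h ∧ U.FreeConv F Δ h φ h) := by
  have key : ¬ ∃ h : U.carrier →ₗ[ℂ] ℂ, IsState h ∧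
      ∀ φ : U.carrier →ₗ[ℂ] ℂ, IsState φ → U.FreeConv F Δ h φ h := by
    rintro ⟨h, hstate, hinv⟩
    have hh1 : h 1 = 1 := hstate.1
    set r : Fin n := ⟨0, by omega⟩ with hr
    have hzero : ∀ q p : Fin n, p ≠ q → h (U.u r q * star (U.u r q)) = 0 := by
      intro q p hpq
      obtain ⟨f, hf⟩ := (U.universal M2 (vmat p q) (vmat_rel_left p q) (vmat_rel_right p q)).exists
      set φ := entry00.comp f.toAlgHom.toLinearMap with hφ
      have φstate : IsState φ := isState_entry00_comp f
      have hφ1 : φ 1 = 1 := φstate.1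
      have key := inv_eq U F Δ hΔ h φ hh1 hφ1 (hinv φ φstate) r p p
      have hval : ∀ k l : Fin n, φ (U.u k p * star (U.u l p)) =
          (if k = p ∧ l = p then (1:ℂ) else 0) + (if k = q ∧ l = q then 1 else 0) := by
        intro k l
        have e : φ (U.u k p * star (U.u l p)) = (vmat p q k p * star (vmat p q l p)) 0 0 := by
          simp [hφ, entry00_apply, LinearMap.comp_apply, map_mul, map_star, hf]
        rw [e, vmat_val p q hpq k l]
      rw [Finset.sum_congr rfl (fun k _ => Finset.sum_congr rfl
        (fun l _ => by rw [hval k l]))] at key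
      have hsplit : (∑ k, ∑ l, ((if k = p ∧ l = p then (1:ℂ) else 0)
            + (if k = q ∧ l = q then 1 else 0)) * h (U.u r k * star (U.u r l)))
          = h (U.u r p * star (U.u r p)) + h (U.u r q * star (U.u r q)) := by
        have : ∀ k l : Fin n, ((if k = p ∧ l = p then (1:ℂ) else 0)
            + (if k = q ∧ l = q then 1 else 0)) * h (U.u r k * star (U.u r l))
            = (if k = p ∧ l = p then (1:ℂ) else 0) * h (U.u r k * star (U.u r l))
            + (if k = q ∧ l = q then (1:ℂ) else 0) * h (U.u r k * star (U.u r l)) := by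
          intro k l; ring
        rw [Finset.sum_congr rfl (fun k _ => Finset.sum_congr rfl (fun l _ => this k l))]
        rw [Finset.sum_congr rfl (fun k _ => Finset.sum_add_distrib), Finset.sum_add_distrib]
        rw [dsum (fun k l => h (U.u r k * star (U.u r l))) p,
          dsum (fun k l => h (U.u r k * star (U.u r l))) q]
      rw [hsplit] at key
      exact (left_eq_add.mp key)
    have hzero' : ∀ q : Fin n, h (U.u r q * star (U.u r q)) = 0 := by
      intro q
      by_cases hq : q.val = 0
      · exact hzero q ⟨1, by omega⟩ (by
          intro hc; apply absurd (congrArg Fin.val hc); simp [hq])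
      · exact hzero q ⟨0, by omega⟩ (by
          intro hc; apply absurd (congrArg Fin.val hc); simp; omega)
    have htr : (1:ℂ) = ∑ k, h (U.u r k * star (U.u r k)) := by
      rw [← map_sum, U.rel_right r r]
      simp [hh1]
    rw [Finset.sum_congr rfl (fun k _ => hzero' k)] at htr
    simp at htr
  refine ⟨key, ?_⟩
  rintro ⟨h, hstate, hinv⟩
  exact key ⟨h, hstate, fun φ hφ => (hinv φ hφ).2⟩

/-- For `n ≥ 2` there is no state `h` on the Brown algebra with
`h ⋆_F φ = h` for every state `φ`; in particular there is no free Haar state on `U⟨n⟩`. -/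
theorem no_free_haar_state (n : ℕ) (hn : 2 ≤ n) (U : BrownAlg n)
    (F : FreeProd U.carrier U.carrier) (Δ : U.carrier →⋆ₐ[ℂ] F.carrier)
    (hΔ : U.IsCoprod F Δ) :
    (¬ ∃ h : U.carrier →ₗ[ℂ] ℂ, IsState h ∧
        ∀ φ : U.carrier →ₗ[ℂ] ℂ, IsState φ → U.FreeConv F Δ h φ h) ∧
    (¬ ∃ h : U.carrier →ₗ[ℂ] ℂ, IsState h ∧
        ∀ φ : U.carrier →ₗ[ℂ] ℂ, IsState φ →
          U.FreeConv F Δ φ h h ∧ U.FreeConv F Δ h φ h) := by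
  exact no_free_haar_state' n hn U F Δ hΔ
end
end

section
/- Let n ≥ 2. There is no state h on the Brown algebra U_n^nc such that h ⋆_T φ = h for every state φ on U_n^nc. In particular, there exists no tensor Haar state on U⟨n⟩, i.e. no state h with φ ⋆_T h = h = h ⋆_T φ for all states φ. -/
noncomputable section

set_option linter.unusedSectionVars false

section TPx

variable {A : Type} [Ring A] [Algebra ℂ A] [StarRing A]

namespace TPx

def Lp (l : List (A ⊕ A)) : A := (l.filterMap Sum.getLeft?).prod
def Rp (l : List (A ⊕ A)) : A := (l.filterMap Sum.getRight?).prod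
def cent (δc : A →⋆ₐ[ℂ] ℂ) (x : A ⊕ A) : Prop :=
  Sum.elim (fun a => δc a = 0) (fun b => δc b = 0) x

variable (F : FreeProd A A)

def eP (l : List (A ⊕ A)) : F.carrier := (l.map F.embed).prod

@[simp] lemma eP_nil : eP F ([] : List (A ⊕ A)) = 1 := rfl
@[simp] lemma embed_inl (a : A) : F.embed (Sum.inl a : A ⊕ A) = F.inl a := rfl
@[simp] lemma embed_inr (b : A) : F.embed (Sum.inr b : A ⊕ A) = F.inr b := rfl
lemma eP_cons (x : A ⊕ A) (l : List (A ⊕ A)) : eP F (x :: l) = F.embed x * eP F l := by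
  simp [eP]
lemma eP_append (l₁ l₂ : List (A ⊕ A)) : eP F (l₁ ++ l₂) = eP F l₁ * eP F l₂ := by
  simp [eP]

@[simp] lemma Lp_nil : Lp ([] : List (A ⊕ A)) = 1 := rfl
@[simp] lemma Rp_nil : Rp ([] : List (A ⊕ A)) = 1 := rfl
lemma Lp_append (l₁ l₂ : List (A ⊕ A)) : Lp (l₁ ++ l₂) = Lp l₁ * Lp l₂ := by
  simp [Lp, List.filterMap_append]
lemma Rp_append (l₁ l₂ : List (A ⊕ A)) : Rp (l₁ ++ l₂) = Rp l₁ * Rp l₂ := by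
  simp [Rp, List.filterMap_append]
@[simp] lemma Lp_cons_inl (a : A) (l : List (A ⊕ A)) : Lp (Sum.inl a :: l) = a * Lp l := by
  simp [Lp]
@[simp] lemma Lp_cons_inr (b : A) (l : List (A ⊕ A)) : Lp (Sum.inr b :: l) = Lp l := by
  simp [Lp, List.filterMap_cons, Sum.getLeft?]
@[simp] lemma Rp_cons_inl (a : A) (l : List (A ⊕ A)) : Rp (Sum.inl a :: l) = Rp l := by
  simp [Rp, List.filterMap_cons, Sum.getRight?]
@[simp] lemma Rp_cons_inr (b : A) (l : List (A ⊕ A)) : Rp (Sum.inr b :: l) = b * Rp l := by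
  simp [Rp]

lemma chain'_rev {l : List (A ⊕ A)} (h : l.Chain' (fun x y => x.isLeft ≠ y.isLeft)) :
    l.reverse.Chain' (fun x y => x.isLeft ≠ y.isLeft) := by
  unfold List.Chain' at h ⊢
  rw [List.isChain_reverse]
  exact List.IsChain.imp (fun a b hab => Ne.symm hab) h

theorem key (δc : A →⋆ₐ[ℂ] ℂ) (φ ψ : A →ₗ[ℂ] ℂ) (Ψ : F.carrier →ₗ[ℂ] ℂ)
    (hΨ : IsTensorProdFunctional F δc φ ψ Ψ) (hφ1 : φ 1 = 1) (hψ1 : ψ 1 = 1) :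
    ∀ (t rc : List (A ⊕ A)), rc.Chain' (fun x y => x.isLeft ≠ y.isLeft) →
      (∀ x ∈ rc, cent δc x) →
      Ψ (eP F (rc.reverse ++ t)) = φ (Lp (rc.reverse ++ t)) * ψ (Rp (rc.reverse ++ t)) := by
  intro t
  induction t with
  | nil =>
    intro rc hc hcent
    match rc with
    | [] => simpa [eP, Lp, Rp, hφ1, hψ1] using hΨ.1
    | z :: rs =>
      refine hΨ.2 ((z :: rs).reverse ++ []) (by simp) ?_ ?_
      · simpa using chain'_rev hc
      · intro x hx
        rw [List.append_nil, List.mem_reverse] at hx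
        exact hcent x hx
  | cons y t' IH =>
    intro rc hc hcent
    rcases y with a | b
    · -- y = inl a
      set a0 : A := a - δc a • 1 with ha0
      have ha0c : δc a0 = 0 := by simp [ha0]
      have hdec : (F.inl a : F.carrier) = F.inl a0 + δc a • 1 := by
        simp [ha0, map_sub, map_smul, map_one, sub_add_cancel]
      have hsplit : eP F (rc.reverse ++ (Sum.inl a :: t')) =
          eP F rc.reverse * (F.inl a0 * eP F t') + δc a • (eP F rc.reverse * eP F t') := by
        rw [eP_append, eP_cons, embed_inl, hdec]
        rw [add_mul, mul_add, smul_mul_assoc, one_mul, mul_smul_comm]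
      have hmain : Ψ (eP F rc.reverse * (F.inl a0 * eP F t')) =
          φ (Lp rc.reverse * (a0 * Lp t')) * ψ (Rp rc.reverse * Rp t') := by
        match rc, hc, hcent with
        | [], _, _ =>
          have := IH [Sum.inl a0] (List.isChain_singleton _) (by
            intro x hx; simp at hx; subst hx; exact ha0c)
          simpa [eP_cons, one_mul] using this
        | (Sum.inl c) :: rs, hc, hcent =>
          have hmerge : eP F ((Sum.inl c :: rs).reverse) * (F.inl a0 * eP F t')
              = eP F ((Sum.inl (c * a0) :: rs).reverse ++ t') := by
            simp [List.reverse_cons, eP_append, eP_cons, map_mul, mul_assoc]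
          have hch : (Sum.inl (c * a0) :: rs).Chain' (fun x y => x.isLeft ≠ y.isLeft) := by
            unfold List.Chain' at hc ⊢
            rw [List.isChain_cons] at hc ⊢
            exact ⟨fun y hy => hc.1 y hy, hc.2⟩
          have hcc : ∀ x ∈ (Sum.inl (c * a0) :: rs), cent δc x := by
            intro x hx
            rcases List.mem_cons.1 hx with rfl | hx
            · simpa [cent, map_mul, ha0c] using (mul_zero (δc c))
            · exact hcent x (List.mem_cons_of_mem _ hx)
          rw [hmerge, IH _ hch hcc]
          congr 1
          · congr 1
            simp [List.reverse_cons, Lp_append, mul_assoc]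
          · congr 1
            simp [List.reverse_cons, Rp_append]
        | (Sum.inr c) :: rs, hc, hcent =>
          have hl : (Sum.inl a0 :: Sum.inr c :: rs).reverse ++ t'
              = (Sum.inr c :: rs).reverse ++ (Sum.inl a0 :: t') := by
            simp
          have hch : (Sum.inl a0 :: Sum.inr c :: rs).Chain' (fun x y => x.isLeft ≠ y.isLeft) := by
            unfold List.Chain' at hc ⊢
            rw [List.isChain_cons_cons]
            exact ⟨by simp, hc⟩
          have hcc : ∀ x ∈ (Sum.inl a0 :: Sum.inr c :: rs), cent δc x := by
            intro x hx
            rcases List.mem_cons.1 hx with rfl | hx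
            · exact ha0c
            · exact hcent x hx
          have := IH _ hch hcc
          rw [hl] at this
          rw [eP_append, eP_cons, embed_inl] at this
          rw [Lp_append, Rp_append] at this
          simpa using this
      have h2 := IH rc hc hcent
      rw [eP_append] at h2
      rw [Lp_append, Rp_append] at h2
      rw [hsplit, map_add, map_smul, hmain, h2]
      rw [Lp_append, Rp_append, Lp_cons_inl, Rp_cons_inl]
      have hX : Lp rc.reverse * (a * Lp t')
          = Lp rc.reverse * (a0 * Lp t') + δc a • (Lp rc.reverse * Lp t') := by
        rw [ha0, sub_mul, smul_mul_assoc, one_mul, mul_sub, mul_smul_comm]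
        rw [sub_add_cancel]
      rw [hX, map_add, map_smul]
      simp only [smul_eq_mul]
      ring
    · -- y = inr b
      set b0 : A := b - δc b • 1 with hb0
      have hb0c : δc b0 = 0 := by simp [hb0]
      have hdec : (F.inr b : F.carrier) = F.inr b0 + δc b • 1 := by
        simp [hb0, map_sub, map_smul, map_one, sub_add_cancel]
      have hsplit : eP F (rc.reverse ++ (Sum.inr b :: t')) =
          eP F rc.reverse * (F.inr b0 * eP F t') + δc b • (eP F rc.reverse * eP F t') := by
        rw [eP_append, eP_cons, embed_inr, hdec]
        rw [add_mul, mul_add, smul_mul_assoc, one_mul, mul_smul_comm]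
      have hmain : Ψ (eP F rc.reverse * (F.inr b0 * eP F t')) =
          φ (Lp rc.reverse * Lp t') * ψ (Rp rc.reverse * (b0 * Rp t')) := by
        match rc, hc, hcent with
        | [], _, _ =>
          have := IH [Sum.inr b0] (List.isChain_singleton _) (by
            intro x hx; simp at hx; subst hx; exact hb0c)
          simpa [eP_cons, one_mul] using this
        | (Sum.inr c) :: rs, hc, hcent =>
          have hmerge : eP F ((Sum.inr c :: rs).reverse) * (F.inr b0 * eP F t')
              = eP F ((Sum.inr (c * b0) :: rs).reverse ++ t') := by
            simp [List.reverse_cons, eP_append, eP_cons, map_mul, mul_assoc]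
          have hch : (Sum.inr (c * b0) :: rs).Chain' (fun x y => x.isLeft ≠ y.isLeft) := by
            unfold List.Chain' at hc ⊢
            rw [List.isChain_cons] at hc ⊢
            exact ⟨fun y hy => hc.1 y hy, hc.2⟩
          have hcc : ∀ x ∈ (Sum.inr (c * b0) :: rs), cent δc x := by
            intro x hx
            rcases List.mem_cons.1 hx with rfl | hx
            · simpa [cent, map_mul, hb0c] using (mul_zero (δc c))
            · exact hcent x (List.mem_cons_of_mem _ hx)
          rw [hmerge, IH _ hch hcc]
          congr 1
          · congr 1
            simp [List.reverse_cons, Lp_append]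
          · congr 1
            simp [List.reverse_cons, Rp_append, mul_assoc]
        | (Sum.inl c) :: rs, hc, hcent =>
          have hl : (Sum.inr b0 :: Sum.inl c :: rs).reverse ++ t'
              = (Sum.inl c :: rs).reverse ++ (Sum.inr b0 :: t') := by
            simp
          have hch : (Sum.inr b0 :: Sum.inl c :: rs).Chain' (fun x y => x.isLeft ≠ y.isLeft) := by
            unfold List.Chain' at hc ⊢
            rw [List.isChain_cons_cons]
            exact ⟨by simp, hc⟩
          have hcc : ∀ x ∈ (Sum.inr b0 :: Sum.inl c :: rs), cent δc x := by
            intro x hx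
            rcases List.mem_cons.1 hx with rfl | hx
            · exact hb0c
            · exact hcent x hx
          have := IH _ hch hcc
          rw [hl] at this
          rw [eP_append, eP_cons, embed_inr] at this
          rw [Lp_append, Rp_append] at this
          simpa using this
      have h2 := IH rc hc hcent
      rw [eP_append] at h2
      rw [Lp_append, Rp_append] at h2
      rw [hsplit, map_add, map_smul, hmain, h2]
      rw [Lp_append, Rp_append, Lp_cons_inr, Rp_cons_inr]
      have hX : Rp rc.reverse * (b * Rp t')
          = Rp rc.reverse * (b0 * Rp t') + δc b • (Rp rc.reverse * Rp t') := by
        rw [hb0, sub_mul, smul_mul_assoc, one_mul, mul_sub, mul_smul_comm]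
        rw [sub_add_cancel]
      rw [hX, map_add, map_smul]
      simp only [smul_eq_mul]
      ring

theorem tpf_eval (δc : A →⋆ₐ[ℂ] ℂ) (φ ψ : A →ₗ[ℂ] ℂ) (Ψ : F.carrier →ₗ[ℂ] ℂ)
    (hΨ : IsTensorProdFunctional F δc φ ψ Ψ) (hφ1 : φ 1 = 1) (hψ1 : ψ 1 = 1)
    (l : List (A ⊕ A)) :
    Ψ ((l.map F.embed).prod) = φ (l.filterMap Sum.getLeft?).prod * ψ (l.filterMap Sum.getRight?).prod := by
  have := key F δc φ ψ Ψ hΨ hφ1 hψ1 l [] List.isChain_nil (by intro x hx; simp at hx)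
  simpa [eP, Lp, Rp] using this

end TPx

end TPx
section Conv

open TPx

lemma sum_mul_sum2 {m : ℕ} {β : Type*} [Ring β] (X Y : Fin m → β) :
    (∑ p, X p) * (∑ q, Y q) = ∑ p, ∑ q, X p * Y q := by
  rw [Finset.sum_mul]
  exact Finset.sum_congr rfl fun p _ => by rw [Finset.mul_sum]

lemma sum_mul_sum4 {m : ℕ} {β : Type*} [Ring β] (X Y Z W : Fin m → β) :
    (∑ p, X p) * ((∑ q, Y q) * ((∑ r, Z r) * (∑ s, W s))) =
      ∑ p, ∑ q, ∑ r, ∑ s, X p * (Y q * (Z r * W s)) := by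
  rw [Finset.sum_mul]
  refine Finset.sum_congr rfl fun p _ => ?_
  rw [sum_mul_sum2 Z W, Finset.sum_mul, Finset.mul_sum]
  refine Finset.sum_congr rfl fun q _ => ?_
  rw [Finset.mul_sum, Finset.mul_sum]
  refine Finset.sum_congr rfl fun r _ => ?_
  rw [Finset.mul_sum, Finset.mul_sum]

variable {n : ℕ} (U : BrownAlg n) (F : FreeProd U.carrier U.carrier)
  (Δ : U.carrier →⋆ₐ[ℂ] F.carrier) (δc : U.carrier →⋆ₐ[ℂ] ℂ)

lemma delta_ustar (hΔ : U.IsCoprod F Δ) (i j : Fin n) :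
    Δ (star (U.u i j)) = ∑ k, F.inr (star (U.u k j)) * F.inl (star (U.u i k)) := by
  rw [map_star, hΔ i j, star_sum]
  refine Finset.sum_congr rfl fun k _ => ?_
  rw [star_mul, map_star, map_star]

lemma inv2a (hΔ : U.IsCoprod F Δ) (h φL : U.carrier →ₗ[ℂ] ℂ) (hh1 : h 1 = 1) (hφ1 : φL 1 = 1)
    (hconv : U.TensorConv F Δ δc h φL h) (w a b : Fin n) :
    h (star (U.u w a) * U.u w b)
      = ∑ p, ∑ q, h (star (U.u w p) * U.u w q) * φL (star (U.u p a) * U.u q b) := by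
  obtain ⟨Ψ, hT, hA⟩ := hconv
  rw [← hA]
  have e1 : Δ (star (U.u w a) * U.u w b) =
      ∑ p, ∑ q, (F.inr (star (U.u p a)) * F.inl (star (U.u w p)))
        * (F.inl (U.u w q) * F.inr (U.u q b)) := by
    rw [map_mul, delta_ustar U F Δ hΔ, hΔ, sum_mul_sum2]
  rw [e1]
  simp only [map_sum]
  refine Finset.sum_congr rfl fun p _ => Finset.sum_congr rfl fun q _ => ?_
  have := tpf_eval F δc h φL Ψ hT hh1 hφ1
    [Sum.inr (star (U.u p a)), Sum.inl (star (U.u w p)), Sum.inl (U.u w q), Sum.inr (U.u q b)]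
  simp only [List.map_cons, List.map_nil, List.prod_cons, List.prod_nil, embed_inl, embed_inr,
    List.filterMap_cons, Sum.getLeft?_inl, Sum.getLeft?_inr, Sum.getRight?_inl, Sum.getRight?_inr,
    List.filterMap_nil, mul_one] at this
  rw [← this]
  congr 1
  simp [mul_assoc]

lemma inv2b (hΔ : U.IsCoprod F Δ) (h φL : U.carrier →ₗ[ℂ] ℂ) (hh1 : h 1 = 1) (hφ1 : φL 1 = 1)
    (hconv : U.TensorConv F Δ δc h φL h) (w a b : Fin n) :
    h (U.u w a * star (U.u w b))
      = ∑ p, ∑ q, h (U.u w p * star (U.u w q)) * φL (U.u p a * star (U.u q b)) := by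
  obtain ⟨Ψ, hT, hA⟩ := hconv
  rw [← hA]
  have e1 : Δ (U.u w a * star (U.u w b)) =
      ∑ p, ∑ q, (F.inl (U.u w p) * F.inr (U.u p a))
        * (F.inr (star (U.u q b)) * F.inl (star (U.u w q))) := by
    rw [map_mul, delta_ustar U F Δ hΔ, hΔ, sum_mul_sum2]
  rw [e1]
  simp only [map_sum]
  refine Finset.sum_congr rfl fun p _ => Finset.sum_congr rfl fun q _ => ?_
  have := tpf_eval F δc h φL Ψ hT hh1 hφ1
    [Sum.inl (U.u w p), Sum.inr (U.u p a), Sum.inr (star (U.u q b)), Sum.inl (star (U.u w q))]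
  simp only [List.map_cons, List.map_nil, List.prod_cons, List.prod_nil, embed_inl, embed_inr,
    List.filterMap_cons, Sum.getLeft?_inl, Sum.getLeft?_inr, Sum.getRight?_inl, Sum.getRight?_inr,
    List.filterMap_nil, mul_one] at this
  rw [← this]
  congr 1
  simp [mul_assoc]

lemma inv4a (hΔ : U.IsCoprod F Δ) (h φL : U.carrier →ₗ[ℂ] ℂ) (hh1 : h 1 = 1) (hφ1 : φL 1 = 1)
    (hconv : U.TensorConv F Δ δc h φL h) (w a b c d : Fin n) :
    h (star (U.u w a) * (U.u w b * (star (U.u w c) * U.u w d)))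
      = ∑ p, ∑ q, ∑ r, ∑ s, h (star (U.u w p) * (U.u w q * (star (U.u w r) * U.u w s)))
          * φL (star (U.u p a) * (U.u q b * (star (U.u r c) * U.u s d))) := by
  obtain ⟨Ψ, hT, hA⟩ := hconv
  rw [← hA]
  have e1 : Δ (star (U.u w a) * (U.u w b * (star (U.u w c) * U.u w d))) =
      ∑ p, ∑ q, ∑ r, ∑ s,
        (F.inr (star (U.u p a)) * F.inl (star (U.u w p)))
        * ((F.inl (U.u w q) * F.inr (U.u q b))
        * ((F.inr (star (U.u r c)) * F.inl (star (U.u w r)))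
        * (F.inl (U.u w s) * F.inr (U.u s d)))) := by
    rw [map_mul, map_mul, map_mul, delta_ustar U F Δ hΔ, delta_ustar U F Δ hΔ, hΔ, hΔ,
      sum_mul_sum4]
  rw [e1]
  simp only [map_sum]
  refine Finset.sum_congr rfl fun p _ => Finset.sum_congr rfl fun q _ =>
    Finset.sum_congr rfl fun r _ => Finset.sum_congr rfl fun s _ => ?_
  have := tpf_eval F δc h φL Ψ hT hh1 hφ1
    [Sum.inr (star (U.u p a)), Sum.inl (star (U.u w p)), Sum.inl (U.u w q), Sum.inr (U.u q b),
     Sum.inr (star (U.u r c)), Sum.inl (star (U.u w r)), Sum.inl (U.u w s), Sum.inr (U.u s d)]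
  simp only [List.map_cons, List.map_nil, List.prod_cons, List.prod_nil, embed_inl, embed_inr,
    List.filterMap_cons, Sum.getLeft?_inl, Sum.getLeft?_inr, Sum.getRight?_inl, Sum.getRight?_inr,
    List.filterMap_nil, mul_one] at this
  rw [← this]
  congr 1
  simp [mul_assoc]

lemma inv4b (hΔ : U.IsCoprod F Δ) (h φL : U.carrier →ₗ[ℂ] ℂ) (hh1 : h 1 = 1) (hφ1 : φL 1 = 1)
    (hconv : U.TensorConv F Δ δc h φL h) (w a b c d : Fin n) :
    h (U.u w a * (star (U.u w b) * (U.u w c * star (U.u w d))))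
      = ∑ p, ∑ q, ∑ r, ∑ s, h (U.u w p * (star (U.u w q) * (U.u w r * star (U.u w s))))
          * φL (U.u p a * (star (U.u q b) * (U.u r c * star (U.u s d)))) := by
  obtain ⟨Ψ, hT, hA⟩ := hconv
  rw [← hA]
  have e1 : Δ (U.u w a * (star (U.u w b) * (U.u w c * star (U.u w d)))) =
      ∑ p, ∑ q, ∑ r, ∑ s,
        (F.inl (U.u w p) * F.inr (U.u p a))
        * ((F.inr (star (U.u q b)) * F.inl (star (U.u w q)))
        * ((F.inl (U.u w r) * F.inr (U.u r c))
        * (F.inr (star (U.u s d)) * F.inl (star (U.u w s))))) := by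
    rw [map_mul, map_mul, map_mul, delta_ustar U F Δ hΔ, delta_ustar U F Δ hΔ, hΔ, hΔ,
      sum_mul_sum4]
  rw [e1]
  simp only [map_sum]
  refine Finset.sum_congr rfl fun p _ => Finset.sum_congr rfl fun q _ =>
    Finset.sum_congr rfl fun r _ => Finset.sum_congr rfl fun s _ => ?_
  have := tpf_eval F δc h φL Ψ hT hh1 hφ1
    [Sum.inl (U.u w p), Sum.inr (U.u p a), Sum.inr (star (U.u q b)), Sum.inl (star (U.u w q)),
     Sum.inl (U.u w r), Sum.inr (U.u r c), Sum.inr (star (U.u s d)), Sum.inl (star (U.u w s))]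
  simp only [List.map_cons, List.map_nil, List.prod_cons, List.prod_nil, embed_inl, embed_inr,
    List.filterMap_cons, Sum.getLeft?_inl, Sum.getLeft?_inr, Sum.getRight?_inl, Sum.getRight?_inr,
    List.filterMap_nil, mul_one] at this
  rw [← this]
  congr 1
  simp [mul_assoc]

end Conv
section States

variable {n : ℕ}

lemma isState_of_starAlgHom {A : Type} [Ring A] [Algebra ℂ A] [StarRing A]
    (f : A →⋆ₐ[ℂ] ℂ) : IsState f.toLinearMap := by
  refine ⟨map_one f, fun a => ?_⟩
  have : f.toLinearMap (star a * a) = Complex.normSq (f a) := by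
    show f (star a * a) = _
    rw [map_mul, map_star]
    rw [Complex.star_def, mul_comm, Complex.mul_conj]
  rw [this]
  constructor
  · simp [Complex.normSq_nonneg]
  · simp

lemma mk_diag_char (U : BrownAlg n) (z : Fin n → ℂ) (hz : ∀ t, star (z t) * z t = 1) :
    ∃ f : U.carrier →⋆ₐ[ℂ] ℂ, ∀ i j, f (U.u i j) = if i = j then z i else 0 := by
  have r1 : ∀ i j, (∑ k, star (if k = i then z k else 0) * (if k = j then z k else 0))
      = if i = j then (1 : ℂ) else 0 := by
    intro i j
    have e : ∀ k : Fin n, star (if k = i then z k else 0) * (if k = j then z k else 0)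
        = if k = i ∧ k = j then (1 : ℂ) else 0 := by
      intro k
      by_cases h1 : k = i
      · by_cases h2 : k = j
        · rw [if_pos h1, if_pos h2, if_pos ⟨h1, h2⟩]; exact hz k
        · rw [if_pos h1, if_neg h2, mul_zero, if_neg (fun hh => h2 hh.2)]
      · rw [if_neg h1, star_zero, zero_mul, if_neg (fun hh => h1 hh.1)]
    rw [Finset.sum_congr rfl fun k _ => e k]
    by_cases hij : i = j
    · subst hij; simp
    · rw [Finset.sum_eq_zero, if_neg hij]
      intro k _
      exact if_neg (fun hh => hij (hh.1.symm.trans hh.2))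
  have r2 : ∀ i j, (∑ k, (if i = k then z i else 0) * star (if j = k then z j else 0))
      = if i = j then (1 : ℂ) else 0 := by
    intro i j
    have e : ∀ k : Fin n, (if i = k then z i else 0) * star (if j = k then z j else 0)
        = if i = k ∧ j = k then (1 : ℂ) else 0 := by
      intro k
      by_cases h1 : i = k
      · by_cases h2 : j = k
        · rw [if_pos h1, if_pos h2, if_pos ⟨h1, h2⟩, mul_comm]
          have : j = i := h2.trans h1.symm
          rw [this]; exact hz i
        · rw [if_pos h1, if_neg h2, star_zero, mul_zero, if_neg (fun hh => h2 hh.2)]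
      · rw [if_neg h1, zero_mul, if_neg (fun hh => h1 hh.1)]
    rw [Finset.sum_congr rfl fun k _ => e k]
    by_cases hij : i = j
    · subst hij; simp
    · rw [Finset.sum_eq_zero, if_neg hij]
      intro k _
      exact if_neg (fun hh => hij (hh.1.trans hh.2.symm))
  obtain ⟨f, hf, -⟩ := U.universal ℂ (fun i j => if i = j then z i else 0) r1 r2
  exact ⟨f, hf⟩

lemma mk_perm_char (U : BrownAlg n) (σ : Equiv.Perm (Fin n)) :
    ∃ f : U.carrier →⋆ₐ[ℂ] ℂ, ∀ i j, f (U.u i j) = if σ i = j then 1 else 0 := by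
  have r1 : ∀ i j, (∑ k, star (if σ k = i then (1:ℂ) else 0) * (if σ k = j then (1:ℂ) else 0))
      = if i = j then (1 : ℂ) else 0 := by
    intro i j
    have e : ∀ k : Fin n, star (if σ k = i then (1:ℂ) else 0) * (if σ k = j then (1:ℂ) else 0)
        = if k = σ.symm i ∧ k = σ.symm j then (1 : ℂ) else 0 := by
      intro k
      by_cases h1 : σ k = i
      · by_cases h2 : σ k = j
        · rw [if_pos h1, if_pos h2,
            if_pos ⟨(σ.apply_eq_iff_eq_symm_apply).mp h1, (σ.apply_eq_iff_eq_symm_apply).mp h2⟩]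
          simp
        · rw [if_pos h1, if_neg h2, mul_zero,
            if_neg (fun hh => h2 ((σ.apply_eq_iff_eq_symm_apply).mpr hh.2))]
      · rw [if_neg h1, star_zero, zero_mul,
          if_neg (fun hh => h1 ((σ.apply_eq_iff_eq_symm_apply).mpr hh.1))]
    rw [Finset.sum_congr rfl fun k _ => e k]
    by_cases hij : i = j
    · subst hij; simp
    · rw [Finset.sum_eq_zero, if_neg hij]
      intro k _
      exact if_neg (fun hh => hij (σ.symm.injective (hh.1.symm.trans hh.2)))
  have r2 : ∀ i j, (∑ k, (if σ i = k then (1:ℂ) else 0) * star (if σ j = k then (1:ℂ) else 0))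
      = if i = j then (1 : ℂ) else 0 := by
    intro i j
    have e : ∀ k : Fin n, (if σ i = k then (1:ℂ) else 0) * star (if σ j = k then (1:ℂ) else 0)
        = if σ i = k ∧ σ j = k then (1 : ℂ) else 0 := by
      intro k
      by_cases h1 : σ i = k
      · by_cases h2 : σ j = k
        · rw [if_pos h1, if_pos h2, if_pos ⟨h1, h2⟩]; simp
        · rw [if_pos h1, if_neg h2, star_zero, mul_zero, if_neg (fun hh => h2 hh.2)]
      · rw [if_neg h1, zero_mul, if_neg (fun hh => h1 hh.1)]
    rw [Finset.sum_congr rfl fun k _ => e k]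
    by_cases hij : i = j
    · subst hij; simp
    · rw [Finset.sum_eq_zero, if_neg hij]
      intro k _
      exact if_neg (fun hh => hij (σ.injective (hh.1.trans hh.2.symm)))
  obtain ⟨f, hf, -⟩ := U.universal ℂ (fun i j => if σ i = j then (1:ℂ) else 0) r1 r2
  exact ⟨f, hf⟩

lemma mk_antipode (U : BrownAlg n) :
    ∃ Sa : U.carrier →⋆ₐ[ℂ] U.carrier, ∀ i j, Sa (U.u i j) = star (U.u j i) := by
  have r1 : ∀ i j, (∑ k, star (star (U.u i k)) * star (U.u j k))
      = if i = j then (1 : U.carrier) else 0 := by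
    intro i j
    simp only [star_star]
    exact U.rel_right i j
  have r2 : ∀ i j, (∑ k, star (U.u k i) * star (star (U.u k j)))
      = if i = j then (1 : U.carrier) else 0 := by
    intro i j
    simp only [star_star]
    exact U.rel_left i j
  obtain ⟨f, hf, -⟩ := U.universal U.carrier (fun i j => star (U.u j i)) r1 r2
  exact ⟨f, hf⟩

lemma isState_comp_starAlgHom {A : Type} [Ring A] [Algebra ℂ A] [StarRing A]
    (h : A →ₗ[ℂ] ℂ) (hh : IsState h) (Sa : A →⋆ₐ[ℂ] A) :
    IsState (h ∘ₗ Sa.toLinearMap) := by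
  constructor
  · show h (Sa 1) = 1
    rw [map_one]; exact hh.1
  · intro a
    have e : (h ∘ₗ Sa.toLinearMap) (star a * a) = h (star (Sa a) * Sa a) := by
      show h (Sa (star a * a)) = _
      rw [map_mul, map_star]
    rw [e]
    exact hh.2 (Sa a)

end States
section Helpers

lemma collapse2 {m : ℕ} (T G : Fin m → Fin m → ℂ) (p q : Fin m)
    (hT : ∀ p' q', T p' q' = if q' = q then if p' = p then G p' q' else 0 else 0) :
    (∑ p', ∑ q', T p' q') = G p q := by
  rw [Finset.sum_congr rfl fun p' _ => Finset.sum_congr rfl fun q' _ => hT p' q']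
  simp [Finset.sum_ite_eq']

lemma collapse4 {m : ℕ} (T G : Fin m → Fin m → Fin m → Fin m → ℂ) (p q r s : Fin m)
    (hT : ∀ p' q' r' s', T p' q' r' s' =
      if s' = s then if r' = r then if q' = q then if p' = p then G p' q' r' s' else 0
        else 0 else 0 else 0) :
    (∑ p', ∑ q', ∑ r', ∑ s', T p' q' r' s') = G p q r s := by
  rw [Finset.sum_congr rfl fun p' _ => Finset.sum_congr rfl fun q' _ =>
    Finset.sum_congr rfl fun r' _ => Finset.sum_congr rfl fun s' _ => hT p' q' r' s']
  simp [Finset.sum_ite_eq']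

lemma reduce4 {m : ℕ} (g : Fin m → Fin m → Fin m → Fin m → ℂ)
    (h0 : ∀ p q r s, ¬((q = p ∧ s = r) ∨ (q = r ∧ s = p)) → g p q r s = 0) :
    (∑ p, ∑ q, ∑ r, ∑ s, g p q r s)
      = (∑ p, ∑ r, g p p r r) + (∑ p, ∑ r, g p r r p) - (∑ p, g p p p p) := by
  have key : ∀ p q r s, g p q r s =
      (if s = r then if q = p then g p q r s else 0 else 0)
      + (if s = p then if q = r then g p q r s else 0 else 0)
      - (if s = p then if r = p then if q = p then g p q r s else 0 else 0 else 0) := by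
    intro p q r s
    by_cases hA : q = p ∧ s = r
    · obtain ⟨rfl, rfl⟩ := hA
      by_cases hrp : s = q
      · subst hrp; simp
      · simp [hrp, fun h : q = s => hrp h.symm]
    · by_cases hB : q = r ∧ s = p
      · obtain ⟨rfl, rfl⟩ := hB
        have hqp : ¬ q = s := fun h => hA ⟨h, h.symm⟩
        simp [hqp, fun h : s = q => hqp h.symm]
      · rw [h0 p q r s (fun h => h.elim hA hB)]
        simp
  rw [Finset.sum_congr rfl fun p _ => Finset.sum_congr rfl fun q _ =>
    Finset.sum_congr rfl fun r _ => Finset.sum_congr rfl fun s _ => key p q r s]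
  simp only [Finset.sum_add_distrib, Finset.sum_sub_distrib]
  congr 1
  · congr 1
    · -- term 1
      refine Finset.sum_congr rfl fun p _ => ?_
      rw [Finset.sum_congr rfl fun q _ => Finset.sum_congr rfl fun r _ =>
        (by simp [Finset.sum_ite_eq'] :
          (∑ s, if s = r then if q = p then g p q r s else 0 else 0)
            = if q = p then g p q r r else 0)]
      rw [Finset.sum_comm]
      refine Finset.sum_congr rfl fun r _ => ?_
      simp [Finset.sum_ite_eq']
    · -- term 2
      refine Finset.sum_congr rfl fun p _ => ?_
      rw [Finset.sum_congr rfl fun q _ => Finset.sum_congr rfl fun r _ =>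
        (by simp [Finset.sum_ite_eq'] :
          (∑ s, if s = p then if q = r then g p q r s else 0 else 0)
            = if q = r then g p q r p else 0)]
      refine Finset.sum_congr rfl fun q _ => ?_
      rw [Finset.sum_ite_eq Finset.univ q (fun r => g p q r p)]
      simp
  · -- term 3
    refine Finset.sum_congr rfl fun p _ => ?_
    rw [Finset.sum_congr rfl fun q _ => Finset.sum_congr rfl fun r _ =>
      (by simp [Finset.sum_ite_eq'] :
        (∑ s, if s = p then if r = p then if q = p then g p q r s else 0 else 0 else 0)
          = if r = p then if q = p then g p q r p else 0 else 0)]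
    rw [Finset.sum_congr rfl fun q _ =>
      (by simp [Finset.sum_ite_eq'] :
        (∑ r, if r = p then if q = p then g p q r p else 0 else 0)
          = if q = p then g p q p p else 0)]
    simp [Finset.sum_ite_eq']

lemma sum_two {m : ℕ} {β : Type*} [AddCommMonoid β] {i0 i1 : Fin m} (hne : i0 ≠ i1)
    (f : Fin m → β) (hf : ∀ k, k ≠ i0 → k ≠ i1 → f k = 0) :
    (∑ k, f k) = f i0 + f i1 := by
  have hsub := Finset.sum_subset (Finset.subset_univ ({i0, i1} : Finset (Fin m)))
    (fun x _ hx => hf x (fun h => hx (by simp [h])) (fun h => hx (by simp [h])))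
  rw [← hsub, Finset.sum_pair hne]

lemma sum_split_one {m : ℕ} (hm : 1 ≤ m) (f : Fin m → ℂ) (i0 : Fin m) (Y : ℂ)
    (ho : ∀ k, k ≠ i0 → f k = Y) :
    (∑ k, f k) = f i0 + ((m : ℂ) - 1) * Y := by
  rw [← Finset.add_sum_erase _ f (Finset.mem_univ i0)]
  congr 1
  rw [Finset.sum_congr rfl fun k hk => ho k (Finset.ne_of_mem_erase hk)]
  rw [Finset.sum_const, Finset.card_erase_of_mem (Finset.mem_univ i0), Finset.card_univ,
    Fintype.card_fin, nsmul_eq_mul, Nat.cast_sub hm, Nat.cast_one]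

lemma sum_diag_off {m : ℕ} (hm : 1 ≤ m) (f : Fin m → Fin m → ℂ) (X Y : ℂ)
    (hd : ∀ p, f p p = X) (ho : ∀ p r, p ≠ r → f p r = Y) :
    (∑ p, ∑ r, f p r) = (m : ℂ) * X + (m : ℂ) * ((m : ℂ) - 1) * Y := by
  have inner : ∀ p, (∑ r, f p r) = X + ((m : ℂ) - 1) * Y := by
    intro p
    rw [sum_split_one hm (f p) p Y (fun k hk => ho p k (Ne.symm hk)), hd p]
  rw [Finset.sum_congr rfl fun p _ => inner p, Finset.sum_const, Finset.card_univ,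
    Fintype.card_fin, nsmul_eq_mul]
  ring

lemma exists_perm {m : ℕ} (p r a b : Fin m) (hpr : p ≠ r) (hab : a ≠ b) :
    ∃ σ : Equiv.Perm (Fin m), σ p = a ∧ σ r = b := by
  refine ⟨(Equiv.swap p a).trans (Equiv.swap ((Equiv.swap p a) r) b), ?_, ?_⟩
  · have hr1 : (Equiv.swap p a) r ≠ a := by
      intro hcontra
      exact hpr ((Equiv.swap p a).injective (hcontra.trans (Equiv.swap_apply_left p a).symm)).symm
    simp only [Equiv.trans_apply, Equiv.swap_apply_left]
    exact Equiv.swap_apply_of_ne_of_ne (Ne.symm hr1) hab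
  · simp only [Equiv.trans_apply, Equiv.swap_apply_left]

lemma pair_of_counts {m : ℕ} (p q r s : Fin m)
    (hc : ∀ t, ((if p = t then 1 else 0) + (if r = t then 1 else 0) : ℤ)
      = (if q = t then 1 else 0) + (if s = t then 1 else 0)) :
    (q = p ∧ s = r) ∨ (q = r ∧ s = p) := by
  by_cases hqp : q = p
  · left
    refine ⟨hqp, ?_⟩
    have e := hc s
    by_cases hrs : r = s
    · exact hrs.symm
    · by_cases hps : p = s
      · exfalso
        have hqs : q = s := hqp.trans hps
        simp [hps, hrs, hqs] at e
      · exfalso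
        have hqs : ¬ q = s := fun h => hps (hqp.symm.trans h)
        simp [hps, hrs, hqs] at e
  · right
    have e1 := hc q
    have hpq : ¬ p = q := fun h => hqp h.symm
    by_cases hrq : r = q
    · have hsq : ¬ s = q := by
        intro hsq
        simp [hpq, hrq, hsq] at e1
      have e2 := hc s
      have hqs : ¬ q = s := fun h => hsq h.symm
      have hrs : ¬ r = s := fun h => hsq (h.symm.trans hrq)
      by_cases hps : p = s
      · exact ⟨hrq.symm, hps.symm⟩
      · exfalso
        simp [hps, hrs, hqs] at e2
    · exfalso
      by_cases hsq : s = q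
      · simp [hpq, hrq, hsq] at e1
      · simp [hpq, hrq, hsq] at e1

lemma Ipow_ne (k1 k2 : ℕ) (h1 : k1 ≤ 2) (h2 : k2 ≤ 2) (hne : k1 ≠ k2) :
    Complex.I ^ k1 * (-Complex.I) ^ k2 ≠ 1 := by
  interval_cases k1 <;> interval_cases k2 <;>
    simp_all [pow_succ, Complex.ext_iff] <;> norm_num

end Helpers
section Rep

def Em (a b : Fin 2) : Matrix (Fin 2) (Fin 2) ℂ := Matrix.single a b 1

lemma Em_mul (a b c d : Fin 2) : Em a b * Em c d = if b = c then Em a d else 0 := by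
  by_cases h : b = c
  · subst h
    rw [if_pos rfl]
    simp [Em]
  · rw [if_neg h]
    simp [Em, h]

lemma Em_star (a b : Fin 2) : star (Em a b) = Em b a := by
  ext i j
  simp [Em, Matrix.star_apply, Matrix.single, and_comm, apply_ite (star : ℂ → ℂ)]

lemma Em_entry (a b : Fin 2) : Em a b 0 0 = if a = 0 ∧ b = 0 then 1 else 0 := by
  simp [Em, Matrix.single]

lemma Em_one : Em 0 0 + Em 1 1 = (1 : Matrix (Fin 2) (Fin 2) ℂ) := by
  ext i j
  fin_cases i <;> fin_cases j <;>
    simp [Em, Matrix.single, Matrix.one_apply]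

variable {n : ℕ} (i0 i1 : Fin n)

def repv : Fin n → Fin n → Matrix (Fin 2) (Fin 2) ℂ := fun i j =>
  if i = i0 ∧ j = i0 then Em 0 0 else if i = i0 ∧ j = i1 then Em 1 0
  else if i = i1 ∧ j = i0 then Em 0 1 else if i = i1 ∧ j = i1 then Em 1 1
  else if i = j then 1 else 0

lemma repv_col0 (hne : i0 ≠ i1) (k : Fin n) :
    repv i0 i1 k i0 = if k = i0 then Em 0 0 else if k = i1 then Em 0 1 else 0 := by
  by_cases h0 : k = i0
  · simp [repv, h0, hne]
  · by_cases h1 : k = i1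
    · simp [repv, h0, h1, hne, Ne.symm hne]
    · simp [repv, h0, h1]

lemma repv_col1 (hne : i0 ≠ i1) (k : Fin n) :
    repv i0 i1 k i1 = if k = i0 then Em 1 0 else if k = i1 then Em 1 1 else 0 := by
  by_cases h0 : k = i0
  · simp [repv, h0, hne, Ne.symm hne]
  · by_cases h1 : k = i1
    · simp [repv, h0, h1, hne, Ne.symm hne]
    · simp [repv, h0, h1, Ne.symm hne]

lemma repv_colgen (j : Fin n) (hj0 : j ≠ i0) (hj1 : j ≠ i1) (k : Fin n) :
    repv i0 i1 k j = if k = j then 1 else 0 := by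
  by_cases h0 : k = i0 <;> by_cases h1 : k = i1 <;>
    simp [repv, h0, h1, hj0, hj1]

lemma repv_row0 (hne : i0 ≠ i1) (k : Fin n) :
    repv i0 i1 i0 k = if k = i0 then Em 0 0 else if k = i1 then Em 1 0 else 0 := by
  by_cases h0 : k = i0
  · simp [repv, h0, hne]
  · by_cases h1 : k = i1
    · simp [repv, h0, h1, hne, Ne.symm hne]
    · simp [repv, h0, h1, hne, Ne.symm h0, Ne.symm h1]

lemma repv_row1 (hne : i0 ≠ i1) (k : Fin n) :
    repv i0 i1 i1 k = if k = i0 then Em 0 1 else if k = i1 then Em 1 1 else 0 := by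
  by_cases h0 : k = i0
  · simp [repv, h0, hne, Ne.symm hne]
  · by_cases h1 : k = i1
    · simp [repv, h0, h1, hne, Ne.symm hne]
    · simp [repv, h0, h1, Ne.symm hne, Ne.symm h0, Ne.symm h1]

lemma repv_rowgen (i : Fin n) (hi0 : i ≠ i0) (hi1 : i ≠ i1) (k : Fin n) :
    repv i0 i1 i k = if i = k then 1 else 0 := by
  by_cases h0 : k = i0 <;> by_cases h1 : k = i1 <;>
    simp_all [repv, Ne.symm hi0, Ne.symm hi1]

lemma rep_rel1 (hne : i0 ≠ i1) : ∀ i j, (∑ k, star (repv i0 i1 k i) * repv i0 i1 k j)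
    = if i = j then (1 : Matrix (Fin 2) (Fin 2) ℂ) else 0 := by
  have d01 : (0 : Fin 2) ≠ 1 := by decide
  have d10 : (1 : Fin 2) ≠ 0 := by decide
  intro i j
  by_cases hi0 : i = i0
  · by_cases hj0 : j = i0
    · rw [hi0, hj0]
      rw [sum_two hne _ (fun k hk0 hk1 => by
        rw [repv_col0 i0 i1 hne k, if_neg hk0, if_neg hk1, star_zero, zero_mul])]
      rw [repv_col0 i0 i1 hne i0, repv_col0 i0 i1 hne i1]
      simp [Ne.symm hne, Em_star, Em_mul, Em_one]
    · by_cases hj1 : j = i1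
      · rw [hi0, hj1]
        rw [sum_two hne _ (fun k hk0 hk1 => by
          rw [repv_col0 i0 i1 hne k, if_neg hk0, if_neg hk1, star_zero, zero_mul])]
        rw [repv_col0 i0 i1 hne i0, repv_col0 i0 i1 hne i1,
          repv_col1 i0 i1 hne i0, repv_col1 i0 i1 hne i1]
        simp [hne, Ne.symm hne, Em_star, Em_mul, d01, d10]
      · rw [hi0]
        have e : ∀ k : Fin n, star (repv i0 i1 k i0) * repv i0 i1 k j
            = if k = j then star (repv i0 i1 k i0) else 0 := by
          intro k
          rw [repv_colgen i0 i1 j hj0 hj1 k]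
          by_cases hkj : k = j
          · rw [if_pos hkj, if_pos hkj, mul_one]
          · rw [if_neg hkj, if_neg hkj, mul_zero]
        rw [Finset.sum_congr rfl fun k _ => e k,
          Finset.sum_ite_eq' Finset.univ j (fun k => star (repv i0 i1 k i0))]
        rw [if_pos (Finset.mem_univ j), repv_col0 i0 i1 hne j, if_neg hj0, if_neg hj1,
          star_zero, if_neg (fun h => hj0 h.symm)]
  · by_cases hi1 : i = i1
    · by_cases hj0 : j = i0
      · rw [hi1, hj0]
        rw [sum_two hne _ (fun k hk0 hk1 => by
          rw [repv_col1 i0 i1 hne k, if_neg hk0, if_neg hk1, star_zero, zero_mul])]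
        rw [repv_col0 i0 i1 hne i0, repv_col0 i0 i1 hne i1,
          repv_col1 i0 i1 hne i0, repv_col1 i0 i1 hne i1]
        simp [hne, Ne.symm hne, Em_star, Em_mul, d01, d10]
      · by_cases hj1 : j = i1
        · rw [hi1, hj1]
          rw [sum_two hne _ (fun k hk0 hk1 => by
            rw [repv_col1 i0 i1 hne k, if_neg hk0, if_neg hk1, star_zero, zero_mul])]
          rw [repv_col1 i0 i1 hne i0, repv_col1 i0 i1 hne i1]
          simp [Ne.symm hne, Em_star, Em_mul, Em_one]
        · rw [hi1]
          have e : ∀ k : Fin n, star (repv i0 i1 k i1) * repv i0 i1 k j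
              = if k = j then star (repv i0 i1 k i1) else 0 := by
            intro k
            rw [repv_colgen i0 i1 j hj0 hj1 k]
            by_cases hkj : k = j
            · rw [if_pos hkj, if_pos hkj, mul_one]
            · rw [if_neg hkj, if_neg hkj, mul_zero]
          rw [Finset.sum_congr rfl fun k _ => e k,
            Finset.sum_ite_eq' Finset.univ j (fun k => star (repv i0 i1 k i1))]
          rw [if_pos (Finset.mem_univ j), repv_col1 i0 i1 hne j, if_neg hj0, if_neg hj1,
            star_zero, if_neg (fun h => hj1 h.symm)]
    · -- i generic
      have e : ∀ k : Fin n, star (repv i0 i1 k i) * repv i0 i1 k j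
          = if k = i then repv i0 i1 k j else 0 := by
        intro k
        rw [repv_colgen i0 i1 i hi0 hi1 k]
        by_cases hki : k = i
        · rw [if_pos hki, if_pos hki, star_one, one_mul]
        · rw [if_neg hki, if_neg hki, star_zero, zero_mul]
      rw [Finset.sum_congr rfl fun k _ => e k,
        Finset.sum_ite_eq' Finset.univ i (fun k => repv i0 i1 k j)]
      rw [if_pos (Finset.mem_univ i)]
      by_cases hj0 : j = i0
      · rw [hj0, repv_col0 i0 i1 hne i, if_neg hi0, if_neg hi1, if_neg (hj0 ▸ hi0)]
      · by_cases hj1 : j = i1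
        · rw [hj1, repv_col1 i0 i1 hne i, if_neg hi0, if_neg hi1, if_neg (hj1 ▸ hi1)]
        · rw [repv_colgen i0 i1 j hj0 hj1 i]

lemma rep_rel2 (hne : i0 ≠ i1) : ∀ i j, (∑ k, repv i0 i1 i k * star (repv i0 i1 j k))
    = if i = j then (1 : Matrix (Fin 2) (Fin 2) ℂ) else 0 := by
  have d01 : (0 : Fin 2) ≠ 1 := by decide
  have d10 : (1 : Fin 2) ≠ 0 := by decide
  intro i j
  by_cases hi0 : i = i0
  · by_cases hj0 : j = i0
    · rw [hi0, hj0]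
      rw [sum_two hne _ (fun k hk0 hk1 => by
        rw [repv_row0 i0 i1 hne k, if_neg hk0, if_neg hk1, zero_mul])]
      rw [repv_row0 i0 i1 hne i0, repv_row0 i0 i1 hne i1]
      simp [Ne.symm hne, Em_star, Em_mul, Em_one]
    · by_cases hj1 : j = i1
      · rw [hi0, hj1]
        rw [sum_two hne _ (fun k hk0 hk1 => by
          rw [repv_row0 i0 i1 hne k, if_neg hk0, if_neg hk1, zero_mul])]
        rw [repv_row0 i0 i1 hne i0, repv_row0 i0 i1 hne i1,
          repv_row1 i0 i1 hne i0, repv_row1 i0 i1 hne i1]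
        simp [hne, Ne.symm hne, Em_star, Em_mul, d01, d10]
      · rw [hi0]
        have e : ∀ k : Fin n, repv i0 i1 i0 k * star (repv i0 i1 j k)
            = if k = j then repv i0 i1 i0 k else 0 := by
          intro k
          rw [repv_rowgen i0 i1 j hj0 hj1 k]
          by_cases hkj : k = j
          · rw [if_pos hkj.symm, if_pos hkj, star_one, mul_one]
          · rw [if_neg (fun h => hkj h.symm), if_neg hkj, star_zero, mul_zero]
        rw [Finset.sum_congr rfl fun k _ => e k,
          Finset.sum_ite_eq' Finset.univ j (fun k => repv i0 i1 i0 k)]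
        rw [if_pos (Finset.mem_univ j), repv_row0 i0 i1 hne j, if_neg hj0, if_neg hj1,
          if_neg (fun h => hj0 h.symm)]
  · by_cases hi1 : i = i1
    · by_cases hj0 : j = i0
      · rw [hi1, hj0]
        rw [sum_two hne _ (fun k hk0 hk1 => by
          rw [repv_row1 i0 i1 hne k, if_neg hk0, if_neg hk1, zero_mul])]
        rw [repv_row0 i0 i1 hne i0, repv_row0 i0 i1 hne i1,
          repv_row1 i0 i1 hne i0, repv_row1 i0 i1 hne i1]
        simp [hne, Ne.symm hne, Em_star, Em_mul, d01, d10]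
      · by_cases hj1 : j = i1
        · rw [hi1, hj1]
          rw [sum_two hne _ (fun k hk0 hk1 => by
            rw [repv_row1 i0 i1 hne k, if_neg hk0, if_neg hk1, zero_mul])]
          rw [repv_row1 i0 i1 hne i0, repv_row1 i0 i1 hne i1]
          simp [Ne.symm hne, Em_star, Em_mul, Em_one]
        · rw [hi1]
          have e : ∀ k : Fin n, repv i0 i1 i1 k * star (repv i0 i1 j k)
              = if k = j then repv i0 i1 i1 k else 0 := by
            intro k
            rw [repv_rowgen i0 i1 j hj0 hj1 k]
            by_cases hkj : k = j
            · rw [if_pos hkj.symm, if_pos hkj, star_one, mul_one]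
            · rw [if_neg (fun h => hkj h.symm), if_neg hkj, star_zero, mul_zero]
          rw [Finset.sum_congr rfl fun k _ => e k,
            Finset.sum_ite_eq' Finset.univ j (fun k => repv i0 i1 i1 k)]
          rw [if_pos (Finset.mem_univ j), repv_row1 i0 i1 hne j, if_neg hj0, if_neg hj1,
            if_neg (fun h => hj1 h.symm)]
    · -- i generic
      have e : ∀ k : Fin n, repv i0 i1 i k * star (repv i0 i1 j k)
          = if k = i then star (repv i0 i1 j k) else 0 := by
        intro k
        rw [repv_rowgen i0 i1 i hi0 hi1 k]
        by_cases hki : k = i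
        · rw [if_pos hki.symm, if_pos hki, one_mul]
        · rw [if_neg (fun h => hki h.symm), if_neg hki, zero_mul]
      rw [Finset.sum_congr rfl fun k _ => e k,
        Finset.sum_ite_eq' Finset.univ i (fun k => star (repv i0 i1 j k))]
      rw [if_pos (Finset.mem_univ i)]
      by_cases hj0 : j = i0
      · rw [hj0, repv_row0 i0 i1 hne i, if_neg hi0, if_neg hi1, star_zero,
          if_neg (hj0 ▸ hi0)]
      · by_cases hj1 : j = i1
        · rw [hj1, repv_row1 i0 i1 hne i, if_neg hi0, if_neg hi1, star_zero,
            if_neg (hj1 ▸ hi1)]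
        · rw [repv_rowgen i0 i1 j hj0 hj1 i]
          by_cases hji : j = i
          · rw [if_pos hji, star_one, if_pos hji.symm]
          · rw [if_neg hji, star_zero, if_neg (fun h => hji h.symm)]

end Rep
section RepVals

variable {n : ℕ} (i0 i1 : Fin n)

lemma valA (hne : i0 ≠ i1) (p r : Fin n) :
    (star (repv i0 i1 p i0) * (repv i0 i1 p i0 * (star (repv i0 i1 r i0) * repv i0 i1 r i0))) 0 0
      = if p = i0 ∧ r = i0 then 1 else 0 := by
  have w0 : repv i0 i1 i0 i0 = Em 0 0 := by rw [repv_col0 i0 i1 hne i0, if_pos rfl]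
  have w1 : repv i0 i1 i1 i0 = Em 0 1 := by
    rw [repv_col0 i0 i1 hne i1, if_neg (Ne.symm hne), if_pos rfl]
  have wo : ∀ x : Fin n, x ≠ i0 → x ≠ i1 → repv i0 i1 x i0 = 0 := fun x h0 h1 => by
    rw [repv_col0 i0 i1 hne x, if_neg h0, if_neg h1]
  by_cases hp0 : p = i0
  · rw [hp0]
    by_cases hr0 : r = i0
    · rw [hr0]; simp [w0, Em_star, Em_mul, Em_entry, hne, Ne.symm hne]
    · by_cases hr1 : r = i1
      · rw [hr1]; simp [w0, w1, Em_star, Em_mul, Em_entry, Ne.symm hne, hne]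
      · rw [wo r hr0 hr1]; simp [w0, Em_star, Em_mul, hr0, hne, Ne.symm hne]
  · by_cases hp1 : p = i1
    · rw [hp1]
      by_cases hr0 : r = i0
      · rw [hr0]; simp [w0, w1, Em_star, Em_mul, Em_entry, hne, Ne.symm hne]
      · by_cases hr1 : r = i1
        · rw [hr1]; simp [w1, Em_star, Em_mul, Em_entry, hne, Ne.symm hne]
        · rw [wo r hr0 hr1]; simp [w1, Em_star, Em_mul, hne, Ne.symm hne]
    · rw [wo p hp0 hp1]; simp [hp0, hne, Ne.symm hne]

lemma valB (hne : i0 ≠ i1) (p r : Fin n) :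
    (star (repv i0 i1 p i0) * (repv i0 i1 r i0 * (star (repv i0 i1 r i0) * repv i0 i1 p i0))) 0 0
      = if p = i0 ∧ (r = i0 ∨ r = i1) then 1 else 0 := by
  have w0 : repv i0 i1 i0 i0 = Em 0 0 := by rw [repv_col0 i0 i1 hne i0, if_pos rfl]
  have w1 : repv i0 i1 i1 i0 = Em 0 1 := by
    rw [repv_col0 i0 i1 hne i1, if_neg (Ne.symm hne), if_pos rfl]
  have wo : ∀ x : Fin n, x ≠ i0 → x ≠ i1 → repv i0 i1 x i0 = 0 := fun x h0 h1 => by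
    rw [repv_col0 i0 i1 hne x, if_neg h0, if_neg h1]
  by_cases hp0 : p = i0
  · rw [hp0]
    by_cases hr0 : r = i0
    · rw [hr0]; simp [w0, Em_star, Em_mul, Em_entry, hne, Ne.symm hne]
    · by_cases hr1 : r = i1
      · rw [hr1]; simp [w0, w1, Em_star, Em_mul, Em_entry, hne, Ne.symm hne]
      · rw [wo r hr0 hr1]; simp [w0, Em_star, Em_mul, hr0, hr1, hne, Ne.symm hne]
  · by_cases hp1 : p = i1
    · rw [hp1]
      by_cases hr0 : r = i0
      · rw [hr0]; simp [w0, w1, Em_star, Em_mul, Em_entry, hne, Ne.symm hne]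
      · by_cases hr1 : r = i1
        · rw [hr1]; simp [w1, Em_star, Em_mul, Em_entry, hne, Ne.symm hne]
        · rw [wo r hr0 hr1]; simp [w1, Em_star, Em_mul, hne, Ne.symm hne]
    · rw [wo p hp0 hp1]; simp [hp0, hne, Ne.symm hne]

lemma valA' (hne : i0 ≠ i1) (p r : Fin n) :
    (repv i0 i1 p i0 * (star (repv i0 i1 p i0) * (repv i0 i1 r i0 * star (repv i0 i1 r i0)))) 0 0
      = if (p = i0 ∨ p = i1) ∧ (r = i0 ∨ r = i1) then 1 else 0 := by
  have w0 : repv i0 i1 i0 i0 = Em 0 0 := by rw [repv_col0 i0 i1 hne i0, if_pos rfl]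
  have w1 : repv i0 i1 i1 i0 = Em 0 1 := by
    rw [repv_col0 i0 i1 hne i1, if_neg (Ne.symm hne), if_pos rfl]
  have wo : ∀ x : Fin n, x ≠ i0 → x ≠ i1 → repv i0 i1 x i0 = 0 := fun x h0 h1 => by
    rw [repv_col0 i0 i1 hne x, if_neg h0, if_neg h1]
  by_cases hp0 : p = i0
  · rw [hp0]
    by_cases hr0 : r = i0
    · rw [hr0]; simp [w0, Em_star, Em_mul, Em_entry, hne, Ne.symm hne]
    · by_cases hr1 : r = i1
      · rw [hr1]; simp [w0, w1, Em_star, Em_mul, Em_entry, hne, Ne.symm hne]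
      · rw [wo r hr0 hr1]; simp [w0, Em_star, Em_mul, hr0, hr1, hne, Ne.symm hne]
  · by_cases hp1 : p = i1
    · rw [hp1]
      by_cases hr0 : r = i0
      · rw [hr0]; simp [w0, w1, Em_star, Em_mul, Em_entry, hne, Ne.symm hne]
      · by_cases hr1 : r = i1
        · rw [hr1]; simp [w1, Em_star, Em_mul, Em_entry, hne, Ne.symm hne]
        · rw [wo r hr0 hr1]; simp [w1, Em_star, Em_mul, hr0, hr1, hne, Ne.symm hne]
    · rw [wo p hp0 hp1]; simp [hp0, hp1, hne, Ne.symm hne]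

lemma valB' (hne : i0 ≠ i1) (p r : Fin n) :
    (repv i0 i1 p i0 * (star (repv i0 i1 r i0) * (repv i0 i1 r i0 * star (repv i0 i1 p i0)))) 0 0
      = if (p = i0 ∧ r = i0) ∨ (p = i1 ∧ r = i1) then 1 else 0 := by
  have w0 : repv i0 i1 i0 i0 = Em 0 0 := by rw [repv_col0 i0 i1 hne i0, if_pos rfl]
  have w1 : repv i0 i1 i1 i0 = Em 0 1 := by
    rw [repv_col0 i0 i1 hne i1, if_neg (Ne.symm hne), if_pos rfl]
  have wo : ∀ x : Fin n, x ≠ i0 → x ≠ i1 → repv i0 i1 x i0 = 0 := fun x h0 h1 => by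
    rw [repv_col0 i0 i1 hne x, if_neg h0, if_neg h1]
  by_cases hp0 : p = i0
  · rw [hp0]
    by_cases hr0 : r = i0
    · rw [hr0]; simp [w0, Em_star, Em_mul, Em_entry, hne, Ne.symm hne]
    · by_cases hr1 : r = i1
      · rw [hr1]; simp [w0, w1, Em_star, Em_mul, Em_entry, hne, Ne.symm hne]
      · rw [wo r hr0 hr1]; simp [w0, Em_star, Em_mul, hr0, hr1, hne, Ne.symm hne]
  · by_cases hp1 : p = i1
    · rw [hp1]
      by_cases hr0 : r = i0
      · rw [hr0]; simp [w0, w1, Em_star, Em_mul, Em_entry, hne, Ne.symm hne]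
      · by_cases hr1 : r = i1
        · rw [hr1]; simp [w1, Em_star, Em_mul, Em_entry, hne, Ne.symm hne]
        · rw [wo r hr0 hr1]; simp [w1, Em_star, Em_mul, hr0, hr1, hne, Ne.symm hne]
    · rw [wo p hp0 hp1]; simp [hp0, hp1, hne, Ne.symm hne]

def entry00 : Matrix (Fin 2) (Fin 2) ℂ →ₗ[ℂ] ℂ where
  toFun M := M 0 0
  map_add' _ _ := rfl
  map_smul' _ _ := rfl

lemma entry00_state_re (M : Matrix (Fin 2) (Fin 2) ℂ) :
    0 ≤ ((star M * M) 0 0).re ∧ ((star M * M) 0 0).im = 0 := by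
  have e : (star M * M) 0 0 = ((∑ k, Complex.normSq (M k 0) : ℝ) : ℂ) := by
    rw [Matrix.mul_apply]
    rw [Finset.sum_congr rfl fun k _ => ?_]
    · rw [Complex.ofReal_sum]
    · rw [Matrix.star_apply, Complex.star_def, mul_comm, Complex.mul_conj]
  rw [e]
  constructor
  · rw [Complex.ofReal_re]
    exact Finset.sum_nonneg fun k _ => Complex.normSq_nonneg _
  · rw [Complex.ofReal_im]

end RepVals
section Moments

variable {n : ℕ} (U : BrownAlg n) (F : FreeProd U.carrier U.carrier)
  (Δ : U.carrier →⋆ₐ[ℂ] F.carrier) (δc : U.carrier →⋆ₐ[ℂ] ℂ)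
  (hΔ : U.IsCoprod F Δ) (h : U.carrier →ₗ[ℂ] ℂ) (hh1 : h 1 = 1)
  (hinv : ∀ φL : U.carrier →ₗ[ℂ] ℂ, IsState φL → U.TensorConv F Δ δc h φL h)

include F Δ δc hΔ hh1 hinv

lemma vanish2b (w p q : Fin n) (hpq : p ≠ q) :
    h (U.u w p * star (U.u w q)) = 0 := by
  obtain ⟨f, hf⟩ := mk_diag_char U (fun t => if t = q then -1 else 1)
    (by intro t; by_cases ht : t = q <;> simp [ht])
  have hst := isState_of_starAlgHom f
  have e := inv2b U F Δ δc hΔ h f.toLinearMap hh1 hst.1 (hinv _ hst) w p q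
  have hval : ∀ p' q', h (U.u w p' * star (U.u w q')) * f.toLinearMap (U.u p' p * star (U.u q' q))
      = if q' = q then if p' = p then h (U.u w p' * star (U.u w q')) * (-1) else 0 else 0 := by
    intro p' q'
    have hfv : f.toLinearMap (U.u p' p * star (U.u q' q))
        = (if p' = p then (if p' = q then (-1:ℂ) else 1) else 0)
          * star (if q' = q then (if q' = q then (-1:ℂ) else 1) else 0) := by
      show f (U.u p' p * star (U.u q' q)) = _
      rw [map_mul, map_star, hf, hf]
    rw [hfv]
    by_cases h1 : p' = p <;> by_cases h2 : q' = q <;>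
      simp [h1, h2, fun hh : p = q => hpq hh]
  have e2 : h (U.u w p * star (U.u w q)) = h (U.u w p * star (U.u w q)) * (-1) :=
    e.trans (collapse2 _
      (fun p' q' => h (U.u w p' * star (U.u w q')) * (-1)) p q hval)
  linear_combination e2 / 2

lemma vanish2a (w p q : Fin n) (hpq : p ≠ q) :
    h (star (U.u w p) * U.u w q) = 0 := by
  obtain ⟨f, hf⟩ := mk_diag_char U (fun t => if t = q then -1 else 1)
    (by intro t; by_cases ht : t = q <;> simp [ht])
  have hst := isState_of_starAlgHom f
  have e := inv2a U F Δ δc hΔ h f.toLinearMap hh1 hst.1 (hinv _ hst) w p q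
  have hval : ∀ p' q', h (star (U.u w p') * U.u w q') * f.toLinearMap (star (U.u p' p) * U.u q' q)
      = if q' = q then if p' = p then h (star (U.u w p') * U.u w q') * (-1) else 0 else 0 := by
    intro p' q'
    have hfv : f.toLinearMap (star (U.u p' p) * U.u q' q)
        = star (if p' = p then (if p' = q then (-1:ℂ) else 1) else 0)
          * (if q' = q then (if q' = q then (-1:ℂ) else 1) else 0) := by
      show f (star (U.u p' p) * U.u q' q) = _
      rw [map_mul, map_star, hf, hf]
    rw [hfv]
    by_cases h1 : p' = p <;> by_cases h2 : q' = q <;>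
      simp [h1, h2, fun hh : p = q => hpq hh]
  have e2 : h (star (U.u w p) * U.u w q) = h (star (U.u w p) * U.u w q) * (-1) :=
    e.trans (collapse2 _
      (fun p' q' => h (star (U.u w p') * U.u w q') * (-1)) p q hval)
  linear_combination e2 / 2

lemma perm2a (σ : Equiv.Perm (Fin n)) (w a b : Fin n) :
    h (star (U.u w a) * U.u w b)
      = h (star (U.u w (σ.symm a)) * U.u w (σ.symm b)) := by
  obtain ⟨f, hf⟩ := mk_perm_char U σ
  have hst := isState_of_starAlgHom f
  have e := inv2a U F Δ δc hΔ h f.toLinearMap hh1 hst.1 (hinv _ hst) w a b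
  have hval : ∀ p' q', h (star (U.u w p') * U.u w q') * f.toLinearMap (star (U.u p' a) * U.u q' b)
      = if q' = σ.symm b then if p' = σ.symm a
          then h (star (U.u w p') * U.u w q') * 1 else 0 else 0 := by
    intro p' q'
    have hfv : f.toLinearMap (star (U.u p' a) * U.u q' b)
        = star (if σ p' = a then (1:ℂ) else 0) * (if σ q' = b then (1:ℂ) else 0) := by
      show f (star (U.u p' a) * U.u q' b) = _
      rw [map_mul, map_star, hf, hf]
    rw [hfv]
    simp only [Equiv.apply_eq_iff_eq_symm_apply]
    by_cases h1 : p' = σ.symm a <;> by_cases h2 : q' = σ.symm b <;> simp [h1, h2]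
  have e2 : h (star (U.u w a) * U.u w b)
      = h (star (U.u w (σ.symm a)) * U.u w (σ.symm b)) * 1 :=
    e.trans (collapse2 _
      (fun p' q' => h (star (U.u w p') * U.u w q') * 1) (σ.symm a) (σ.symm b) hval)
  rw [mul_one] at e2
  exact e2

lemma perm2b (σ : Equiv.Perm (Fin n)) (w a b : Fin n) :
    h (U.u w a * star (U.u w b))
      = h (U.u w (σ.symm a) * star (U.u w (σ.symm b))) := by
  obtain ⟨f, hf⟩ := mk_perm_char U σ
  have hst := isState_of_starAlgHom f
  have e := inv2b U F Δ δc hΔ h f.toLinearMap hh1 hst.1 (hinv _ hst) w a b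
  have hval : ∀ p' q', h (U.u w p' * star (U.u w q')) * f.toLinearMap (U.u p' a * star (U.u q' b))
      = if q' = σ.symm b then if p' = σ.symm a
          then h (U.u w p' * star (U.u w q')) * 1 else 0 else 0 := by
    intro p' q'
    have hfv : f.toLinearMap (U.u p' a * star (U.u q' b))
        = (if σ p' = a then (1:ℂ) else 0) * star (if σ q' = b then (1:ℂ) else 0) := by
      show f (U.u p' a * star (U.u q' b)) = _
      rw [map_mul, map_star, hf, hf]
    rw [hfv]
    simp only [Equiv.apply_eq_iff_eq_symm_apply]
    by_cases h1 : p' = σ.symm a <;> by_cases h2 : q' = σ.symm b <;> simp [h1, h2]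
  have e2 : h (U.u w a * star (U.u w b))
      = h (U.u w (σ.symm a) * star (U.u w (σ.symm b))) * 1 :=
    e.trans (collapse2 _
      (fun p' q' => h (U.u w p' * star (U.u w q')) * 1) (σ.symm a) (σ.symm b) hval)
  rw [mul_one] at e2
  exact e2

lemma perm4a (σ : Equiv.Perm (Fin n)) (w a b c d : Fin n) :
    h (star (U.u w a) * (U.u w b * (star (U.u w c) * U.u w d)))
      = h (star (U.u w (σ.symm a)) * (U.u w (σ.symm b)
          * (star (U.u w (σ.symm c)) * U.u w (σ.symm d)))) := by
  obtain ⟨f, hf⟩ := mk_perm_char U σ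
  have hst := isState_of_starAlgHom f
  have e := inv4a U F Δ δc hΔ h f.toLinearMap hh1 hst.1 (hinv _ hst) w a b c d
  have hval : ∀ p' q' r' s',
      h (star (U.u w p') * (U.u w q' * (star (U.u w r') * U.u w s')))
        * f.toLinearMap (star (U.u p' a) * (U.u q' b * (star (U.u r' c) * U.u s' d)))
      = if s' = σ.symm d then if r' = σ.symm c then if q' = σ.symm b then if p' = σ.symm a
          then h (star (U.u w p') * (U.u w q' * (star (U.u w r') * U.u w s'))) * 1
          else 0 else 0 else 0 else 0 := by
    intro p' q' r' s'
    have hfv : f.toLinearMap (star (U.u p' a) * (U.u q' b * (star (U.u r' c) * U.u s' d)))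
        = star (if σ p' = a then (1:ℂ) else 0) * ((if σ q' = b then (1:ℂ) else 0)
          * (star (if σ r' = c then (1:ℂ) else 0) * (if σ s' = d then (1:ℂ) else 0))) := by
      show f _ = _
      rw [map_mul, map_mul, map_mul, map_star, map_star, hf, hf, hf, hf]
    rw [hfv]
    simp only [Equiv.apply_eq_iff_eq_symm_apply]
    by_cases h1 : p' = σ.symm a <;> by_cases h2 : q' = σ.symm b <;>
      by_cases h3 : r' = σ.symm c <;> by_cases h4 : s' = σ.symm d <;>
      simp [h1, h2, h3, h4]
  have e2 : h (star (U.u w a) * (U.u w b * (star (U.u w c) * U.u w d)))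
      = h (star (U.u w (σ.symm a)) * (U.u w (σ.symm b)
          * (star (U.u w (σ.symm c)) * U.u w (σ.symm d)))) * 1 :=
    e.trans (collapse4 _
      (fun p' q' r' s' => h (star (U.u w p') * (U.u w q' * (star (U.u w r') * U.u w s'))) * 1)
      (σ.symm a) (σ.symm b) (σ.symm c) (σ.symm d) hval)
  rw [mul_one] at e2
  exact e2

lemma perm4b (σ : Equiv.Perm (Fin n)) (w a b c d : Fin n) :
    h (U.u w a * (star (U.u w b) * (U.u w c * star (U.u w d))))
      = h (U.u w (σ.symm a) * (star (U.u w (σ.symm b))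
          * (U.u w (σ.symm c) * star (U.u w (σ.symm d))))) := by
  obtain ⟨f, hf⟩ := mk_perm_char U σ
  have hst := isState_of_starAlgHom f
  have e := inv4b U F Δ δc hΔ h f.toLinearMap hh1 hst.1 (hinv _ hst) w a b c d
  have hval : ∀ p' q' r' s',
      h (U.u w p' * (star (U.u w q') * (U.u w r' * star (U.u w s'))))
        * f.toLinearMap (U.u p' a * (star (U.u q' b) * (U.u r' c * star (U.u s' d))))
      = if s' = σ.symm d then if r' = σ.symm c then if q' = σ.symm b then if p' = σ.symm a
          then h (U.u w p' * (star (U.u w q') * (U.u w r' * star (U.u w s')))) * 1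
          else 0 else 0 else 0 else 0 := by
    intro p' q' r' s'
    have hfv : f.toLinearMap (U.u p' a * (star (U.u q' b) * (U.u r' c * star (U.u s' d))))
        = (if σ p' = a then (1:ℂ) else 0) * (star (if σ q' = b then (1:ℂ) else 0)
          * ((if σ r' = c then (1:ℂ) else 0) * star (if σ s' = d then (1:ℂ) else 0))) := by
      show f _ = _
      rw [map_mul, map_mul, map_mul, map_star, map_star, hf, hf, hf, hf]
    rw [hfv]
    simp only [Equiv.apply_eq_iff_eq_symm_apply]
    by_cases h1 : p' = σ.symm a <;> by_cases h2 : q' = σ.symm b <;>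
      by_cases h3 : r' = σ.symm c <;> by_cases h4 : s' = σ.symm d <;>
      simp [h1, h2, h3, h4]
  have e2 : h (U.u w a * (star (U.u w b) * (U.u w c * star (U.u w d))))
      = h (U.u w (σ.symm a) * (star (U.u w (σ.symm b))
          * (U.u w (σ.symm c) * star (U.u w (σ.symm d))))) * 1 :=
    e.trans (collapse4 _
      (fun p' q' r' s' => h (U.u w p' * (star (U.u w q') * (U.u w r' * star (U.u w s')))) * 1)
      (σ.symm a) (σ.symm b) (σ.symm c) (σ.symm d) hval)
  rw [mul_one] at e2
  exact e2

lemma vanish4a (w p q r s : Fin n) (hnp : ¬((q = p ∧ s = r) ∨ (q = r ∧ s = p))) :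
    h (star (U.u w p) * (U.u w q * (star (U.u w r) * U.u w s))) = 0 := by
  have hex : ∃ t, ((if p = t then 1 else 0) + (if r = t then 1 else 0) : ℤ)
      ≠ (if q = t then 1 else 0) + (if s = t then 1 else 0) := by
    by_contra hall
    push_neg at hall
    exact hnp (pair_of_counts p q r s hall)
  obtain ⟨t, ht⟩ := hex
  set z : Fin n → ℂ := fun x => if x = t then Complex.I else 1 with hzd
  have hz : ∀ x, star (z x) * z x = 1 := by
    intro x
    by_cases hx : x = t <;> simp [hzd, hx, Complex.star_def, Complex.conj_I]
  obtain ⟨f, hf⟩ := mk_diag_char U z hz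
  have hst := isState_of_starAlgHom f
  have e := inv4a U F Δ δc hΔ h f.toLinearMap hh1 hst.1 (hinv _ hst) w p q r s
  have hval : ∀ p' q' r' s',
      h (star (U.u w p') * (U.u w q' * (star (U.u w r') * U.u w s')))
        * f.toLinearMap (star (U.u p' p) * (U.u q' q * (star (U.u r' r) * U.u s' s)))
      = if s' = s then if r' = r then if q' = q then if p' = p
          then h (star (U.u w p') * (U.u w q' * (star (U.u w r') * U.u w s')))
            * (star (z p') * (z q' * (star (z r') * z s')))
          else 0 else 0 else 0 else 0 := by
    intro p' q' r' s'
    have hfv : f.toLinearMap (star (U.u p' p) * (U.u q' q * (star (U.u r' r) * U.u s' s)))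
        = star (if p' = p then z p' else 0) * ((if q' = q then z q' else 0)
          * (star (if r' = r then z r' else 0) * (if s' = s then z s' else 0))) := by
      show f _ = _
      rw [map_mul, map_mul, map_mul, map_star, map_star, hf, hf, hf, hf]
    rw [hfv]
    by_cases h1 : p' = p <;> by_cases h2 : q' = q <;>
      by_cases h3 : r' = r <;> by_cases h4 : s' = s <;>
      simp [h1, h2, h3, h4]
  have e2 : h (star (U.u w p) * (U.u w q * (star (U.u w r) * U.u w s)))
      = h (star (U.u w p) * (U.u w q * (star (U.u w r) * U.u w s)))
        * (star (z p) * (z q * (star (z r) * z s))) :=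
    e.trans (collapse4 _
      (fun p' q' r' s' => h (star (U.u w p') * (U.u w q' * (star (U.u w r') * U.u w s')))
        * (star (z p') * (z q' * (star (z r') * z s')))) p q r s hval)
  -- now compute the factor
  set k1 : ℕ := (if q = t then 1 else 0) + (if s = t then 1 else 0) with hk1
  set k2 : ℕ := (if p = t then 1 else 0) + (if r = t then 1 else 0) with hk2
  have hfac : star (z p) * (z q * (star (z r) * z s)) = Complex.I ^ k1 * (-Complex.I) ^ k2 := by
    rw [hk1, hk2, hzd]
    by_cases h1 : p = t <;> by_cases h2 : q = t <;> by_cases h3 : r = t <;> by_cases h4 : s = t <;>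
      simp [h1, h2, h3, h4, Complex.star_def, Complex.conj_I, pow_succ] <;> ring
  rw [hfac] at e2
  have hk1le : k1 ≤ 2 := by rw [hk1]; split_ifs <;> omega
  have hk2le : k2 ≤ 2 := by rw [hk2]; split_ifs <;> omega
  have hkne : k1 ≠ k2 := by
    intro hcon
    apply ht
    rw [hk1, hk2] at hcon
    split_ifs at hcon <;> omega
  have hne1 := Ipow_ne k1 k2 hk1le hk2le hkne
  by_contra hM
  exact hne1 (mul_left_cancel₀ hM (e2.symm.trans (mul_one _).symm))

lemma vanish4b (w p q r s : Fin n) (hnp : ¬((q = p ∧ s = r) ∨ (q = r ∧ s = p))) :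
    h (U.u w p * (star (U.u w q) * (U.u w r * star (U.u w s)))) = 0 := by
  have hex : ∃ t, ((if p = t then 1 else 0) + (if r = t then 1 else 0) : ℤ)
      ≠ (if q = t then 1 else 0) + (if s = t then 1 else 0) := by
    by_contra hall
    push_neg at hall
    exact hnp (pair_of_counts p q r s hall)
  obtain ⟨t, ht⟩ := hex
  set z : Fin n → ℂ := fun x => if x = t then Complex.I else 1 with hzd
  have hz : ∀ x, star (z x) * z x = 1 := by
    intro x
    by_cases hx : x = t <;> simp [hzd, hx, Complex.star_def, Complex.conj_I]
  obtain ⟨f, hf⟩ := mk_diag_char U z hz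
  have hst := isState_of_starAlgHom f
  have e := inv4b U F Δ δc hΔ h f.toLinearMap hh1 hst.1 (hinv _ hst) w p q r s
  have hval : ∀ p' q' r' s',
      h (U.u w p' * (star (U.u w q') * (U.u w r' * star (U.u w s'))))
        * f.toLinearMap (U.u p' p * (star (U.u q' q) * (U.u r' r * star (U.u s' s))))
      = if s' = s then if r' = r then if q' = q then if p' = p
          then h (U.u w p' * (star (U.u w q') * (U.u w r' * star (U.u w s'))))
            * (z p' * (star (z q') * (z r' * star (z s'))))
          else 0 else 0 else 0 else 0 := by
    intro p' q' r' s'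
    have hfv : f.toLinearMap (U.u p' p * (star (U.u q' q) * (U.u r' r * star (U.u s' s))))
        = (if p' = p then z p' else 0) * (star (if q' = q then z q' else 0)
          * ((if r' = r then z r' else 0) * star (if s' = s then z s' else 0))) := by
      show f _ = _
      rw [map_mul, map_mul, map_mul, map_star, map_star, hf, hf, hf, hf]
    rw [hfv]
    by_cases h1 : p' = p <;> by_cases h2 : q' = q <;>
      by_cases h3 : r' = r <;> by_cases h4 : s' = s <;>
      simp [h1, h2, h3, h4]
  have e2 : h (U.u w p * (star (U.u w q) * (U.u w r * star (U.u w s))))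
      = h (U.u w p * (star (U.u w q) * (U.u w r * star (U.u w s))))
        * (z p * (star (z q) * (z r * star (z s)))) :=
    e.trans (collapse4 _
      (fun p' q' r' s' => h (U.u w p' * (star (U.u w q') * (U.u w r' * star (U.u w s'))))
        * (z p' * (star (z q') * (z r' * star (z s'))))) p q r s hval)
  set k1 : ℕ := (if p = t then 1 else 0) + (if r = t then 1 else 0) with hk1
  set k2 : ℕ := (if q = t then 1 else 0) + (if s = t then 1 else 0) with hk2
  have hfac : z p * (star (z q) * (z r * star (z s))) = Complex.I ^ k1 * (-Complex.I) ^ k2 := by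
    rw [hk1, hk2, hzd]
    by_cases h1 : p = t <;> by_cases h2 : q = t <;> by_cases h3 : r = t <;> by_cases h4 : s = t <;>
      simp [h1, h2, h3, h4, Complex.star_def, Complex.conj_I, pow_succ] <;> ring
  rw [hfac] at e2
  have hk1le : k1 ≤ 2 := by rw [hk1]; split_ifs <;> omega
  have hk2le : k2 ≤ 2 := by rw [hk2]; split_ifs <;> omega
  have hkne : k1 ≠ k2 := by
    intro hcon
    apply ht
    rw [hk1, hk2] at hcon
    split_ifs at hcon <;> omega
  have hne1 := Ipow_ne k1 k2 hk1le hk2le hkne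
  by_contra hM
  exact hne1 (mul_left_cancel₀ hM (e2.symm.trans (mul_one _).symm))

end Moments

set_option maxHeartbeats 2000000 in
/-- For `n ≥ 2` there is no state `h` on the Brown algebra with
`h ⋆_T φ = h` for every state `φ`; in particular there is no tensor Haar state on `U⟨n⟩`. -/
theorem no_tensor_haar_state (n : ℕ) (hn : 2 ≤ n) (U : BrownAlg n)
    (F : FreeProd U.carrier U.carrier) (Δ : U.carrier →⋆ₐ[ℂ] F.carrier)
    (hΔ : U.IsCoprod F Δ) (δc : U.carrier →⋆ₐ[ℂ] ℂ) (hδ : U.IsCounit δc) :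
    (¬ ∃ h : U.carrier →ₗ[ℂ] ℂ, IsState h ∧
        ∀ φ : U.carrier →ₗ[ℂ] ℂ, IsState φ → U.TensorConv F Δ δc h φ h) ∧
    (¬ ∃ h : U.carrier →ₗ[ℂ] ℂ, IsState h ∧
        ∀ φ : U.carrier →ₗ[ℂ] ℂ, IsState φ →
          U.TensorConv F Δ δc φ h h ∧ U.TensorConv F Δ δc h φ h) := by
  have main : ¬ ∃ h : U.carrier →ₗ[ℂ] ℂ, IsState h ∧
      ∀ φ : U.carrier →ₗ[ℂ] ℂ, IsState φ → U.TensorConv F Δ δc h φ h := by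
    rintro ⟨h, hstate, hinv⟩
    have hh1 : h 1 = 1 := hstate.1
    set i0 : Fin n := ⟨0, by omega⟩ with hi0d
    set i1 : Fin n := ⟨1, by omega⟩ with hi1d
    have hne : i0 ≠ i1 := by simp [hi0d, hi1d, Fin.ext_iff]
    set Mu : ℂ := h (U.u i0 i0 * star (U.u i0 i0)) with hMud
    set Lam : ℂ := h (star (U.u i0 i0) * U.u i0 i0) with hLamd
    have permb : ∀ p, h (U.u i0 p * star (U.u i0 p)) = Mu := by
      intro p
      have e := perm2b U F Δ δc hΔ h hh1 hinv (Equiv.swap p i0) i0 p p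
      rw [Equiv.symm_swap, Equiv.swap_apply_left] at e
      exact e
    have perma : ∀ p, h (star (U.u i0 p) * U.u i0 p) = Lam := by
      intro p
      have e := perm2a U F Δ δc hΔ h hh1 hinv (Equiv.swap p i0) i0 p p
      rw [Equiv.symm_swap, Equiv.swap_apply_left] at e
      exact e
    have hMu : (n : ℂ) * Mu = 1 := by
      have e0 : (∑ k, U.u i0 k * star (U.u i0 k)) = 1 := by simpa using U.rel_right i0 i0
      have e1 : (∑ k, h (U.u i0 k * star (U.u i0 k))) = 1 := by
        rw [← map_sum, e0, hh1]
      rw [Finset.sum_congr rfl (fun k _ => permb k), Finset.sum_const, Finset.card_univ,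
        Fintype.card_fin, nsmul_eq_mul] at e1
      exact e1
    obtain ⟨Sa, hSa⟩ := mk_antipode U
    set φS : U.carrier →ₗ[ℂ] ℂ := h ∘ₗ Sa.toLinearMap with hφSd
    have hφSstate : IsState φS := isState_comp_starAlgHom h hstate Sa
    have hconvS := hinv φS hφSstate
    have hLam : Lam = Mu := by
      have hSlem : ∀ x y : Fin n, φS (U.u x i0 * star (U.u y i0))
          = h (star (U.u i0 x) * U.u i0 y) := by
        intro x y
        show h (Sa (U.u x i0 * star (U.u y i0))) = _
        rw [map_mul, map_star, hSa, hSa, star_star]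
      have e := inv2b U F Δ δc hΔ h φS hh1 hφSstate.1 hconvS i0 i0 i0
      have hval : ∀ p q, h (U.u i0 p * star (U.u i0 q)) * φS (U.u p i0 * star (U.u q i0))
          = if q = p then Mu * Lam else 0 := by
        intro p q
        by_cases hqp : q = p
        · rw [if_pos hqp, hqp, hSlem p p, permb p, perma p]
        · rw [if_neg hqp,
            vanish2b U F Δ δc hΔ h hh1 hinv i0 p q (fun hh => hqp hh.symm), zero_mul]
      have e2 : Mu = (n : ℂ) * (Mu * Lam) := by
        refine e.trans ?_
        rw [Finset.sum_congr rfl (fun p _ => Finset.sum_congr rfl (fun q _ => hval p q))]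
        rw [Finset.sum_congr rfl (fun p _ =>
          Finset.sum_ite_eq' Finset.univ p (fun _ => Mu * Lam))]
        simp [Finset.sum_const, Finset.card_univ, nsmul_eq_mul, hne, Ne.symm hne]
      linear_combination (-1 : ℂ) * e2 - Lam * hMu
    obtain ⟨π, hπ, -⟩ := U.universal (Matrix (Fin 2) (Fin 2) ℂ) (repv i0 i1)
      (rep_rel1 i0 i1 hne) (rep_rel2 i0 i1 hne)
    set φR : U.carrier →ₗ[ℂ] ℂ := entry00 ∘ₗ π.toLinearMap with hφRd
    have hφRstate : IsState φR := by
      constructor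
      · show entry00 (π 1) = 1
        rw [map_one]
        show (1 : Matrix (Fin 2) (Fin 2) ℂ) 0 0 = 1
        simp [Matrix.one_apply, hne, Ne.symm hne]
      · intro a
        have e : φR (star a * a) = (star (π a) * π a) 0 0 := by
          show entry00 (π (star a * a)) = _
          rw [map_mul, map_star]
          rfl
        rw [e]
        exact entry00_state_re (π a)
    have hconvR := hinv φR hφRstate
    set α : ℂ := h (star (U.u i0 i0) * (U.u i0 i0 * (star (U.u i0 i0) * U.u i0 i0))) with hαd
    set a2 : ℂ := h (star (U.u i0 i0) * (U.u i0 i0 * (star (U.u i0 i1) * U.u i0 i1))) with ha2d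
    set b2 : ℂ := h (star (U.u i0 i0) * (U.u i0 i1 * (star (U.u i0 i1) * U.u i0 i0))) with hb2d
    set α' : ℂ := h (U.u i0 i0 * (star (U.u i0 i0) * (U.u i0 i0 * star (U.u i0 i0)))) with hα'd
    set a2' : ℂ := h (U.u i0 i0 * (star (U.u i0 i0) * (U.u i0 i1 * star (U.u i0 i1)))) with ha2'd
    have symm_of : ∀ (σ : Equiv.Perm (Fin n)) (x y : Fin n), σ x = y → σ.symm y = x := by
      intro σ x y hxy
      rw [← hxy, Equiv.symm_apply_apply]
    have cA4diag : ∀ p, h (star (U.u i0 p) * (U.u i0 p * (star (U.u i0 p) * U.u i0 p))) = α := by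
      intro p
      have e := perm4a U F Δ δc hΔ h hh1 hinv (Equiv.swap p i0) i0 p p p p
      rw [Equiv.symm_swap, Equiv.swap_apply_left] at e
      exact e
    have cB4diag : ∀ p,
        h (U.u i0 p * (star (U.u i0 p) * (U.u i0 p * star (U.u i0 p)))) = α' := by
      intro p
      have e := perm4b U F Δ δc hΔ h hh1 hinv (Equiv.swap p i0) i0 p p p p
      rw [Equiv.symm_swap, Equiv.swap_apply_left] at e
      exact e
    have cA4offA : ∀ p r, p ≠ r →
        h (star (U.u i0 p) * (U.u i0 p * (star (U.u i0 r) * U.u i0 r))) = a2 := by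
      intro p r hpr
      obtain ⟨σ, hσ0, hσ1⟩ := exists_perm i0 i1 p r hne hpr
      have e := perm4a U F Δ δc hΔ h hh1 hinv σ i0 p p r r
      rw [symm_of σ i0 p hσ0, symm_of σ i1 r hσ1] at e
      exact e
    have cA4offB : ∀ p r, p ≠ r →
        h (star (U.u i0 p) * (U.u i0 r * (star (U.u i0 r) * U.u i0 p))) = b2 := by
      intro p r hpr
      obtain ⟨σ, hσ0, hσ1⟩ := exists_perm i0 i1 p r hne hpr
      have e := perm4a U F Δ δc hΔ h hh1 hinv σ i0 p r r p
      rw [symm_of σ i0 p hσ0, symm_of σ i1 r hσ1] at e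
      exact e
    have cB4offA : ∀ p r, p ≠ r →
        h (U.u i0 p * (star (U.u i0 p) * (U.u i0 r * star (U.u i0 r)))) = a2' := by
      intro p r hpr
      obtain ⟨σ, hσ0, hσ1⟩ := exists_perm i0 i1 p r hne hpr
      have e := perm4b U F Δ δc hΔ h hh1 hinv σ i0 p p r r
      rw [symm_of σ i0 p hσ0, symm_of σ i1 r hσ1] at e
      exact e
    have hφRvalA : ∀ p q r s : Fin n,
        φR (star (U.u p i0) * (U.u q i0 * (star (U.u r i0) * U.u s i0)))
          = (star (repv i0 i1 p i0) * (repv i0 i1 q i0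
              * (star (repv i0 i1 r i0) * repv i0 i1 s i0))) 0 0 := by
      intro p q r s
      have hπw : π (star (U.u p i0) * (U.u q i0 * (star (U.u r i0) * U.u s i0)))
          = star (repv i0 i1 p i0) * (repv i0 i1 q i0
              * (star (repv i0 i1 r i0) * repv i0 i1 s i0)) := by
        rw [map_mul, map_mul, map_mul, map_star, map_star, hπ, hπ, hπ, hπ]
      show entry00 (π _) = _
      rw [hπw]
      rfl
    have hφRvalB : ∀ p q r s : Fin n,
        φR (U.u p i0 * (star (U.u q i0) * (U.u r i0 * star (U.u s i0))))
          = (repv i0 i1 p i0 * (star (repv i0 i1 q i0)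
              * (repv i0 i1 r i0 * star (repv i0 i1 s i0)))) 0 0 := by
      intro p q r s
      have hπw : π (U.u p i0 * (star (U.u q i0) * (U.u r i0 * star (U.u s i0))))
          = repv i0 i1 p i0 * (star (repv i0 i1 q i0)
              * (repv i0 i1 r i0 * star (repv i0 i1 s i0))) := by
        rw [map_mul, map_mul, map_mul, map_star, map_star, hπ, hπ, hπ, hπ]
      show entry00 (π _) = _
      rw [hπw]
      rfl
    have hφSvalA : ∀ p q r s : Fin n,
        φS (star (U.u p i0) * (U.u q i0 * (star (U.u r i0) * U.u s i0)))
          = h (U.u i0 p * (star (U.u i0 q) * (U.u i0 r * star (U.u i0 s)))) := by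
      intro p q r s
      have hw : Sa (star (U.u p i0) * (U.u q i0 * (star (U.u r i0) * U.u s i0)))
          = U.u i0 p * (star (U.u i0 q) * (U.u i0 r * star (U.u i0 s))) := by
        rw [map_mul, map_mul, map_mul, map_star, map_star, hSa, hSa, hSa, hSa,
          star_star, star_star]
      show h (Sa _) = _
      rw [hw]
    have hφSvalB : ∀ p q r s : Fin n,
        φS (U.u p i0 * (star (U.u q i0) * (U.u r i0 * star (U.u s i0))))
          = h (star (U.u i0 p) * (U.u i0 q * (star (U.u i0 r) * U.u i0 s))) := by
      intro p q r s
      have hw : Sa (U.u p i0 * (star (U.u q i0) * (U.u r i0 * star (U.u s i0))))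
          = star (U.u i0 p) * (U.u i0 q * (star (U.u i0 r) * U.u i0 s)) := by
        rw [map_mul, map_mul, map_mul, map_star, map_star, hSa, hSa, hSa, hSa,
          star_star, star_star]
      show h (Sa _) = _
      rw [hw]
    -- (I) + φR : b2 = 0
    have hb2 : b2 = 0 := by
      have e := inv4a U F Δ δc hΔ h φR hh1 hφRstate.1 hconvR i0 i0 i0 i0 i0
      have e3 : α =
          (∑ p, ∑ r, h (star (U.u i0 p) * (U.u i0 p * (star (U.u i0 r) * U.u i0 r)))
            * φR (star (U.u p i0) * (U.u p i0 * (star (U.u r i0) * U.u r i0))))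
          + (∑ p, ∑ r, h (star (U.u i0 p) * (U.u i0 r * (star (U.u i0 r) * U.u i0 p)))
            * φR (star (U.u p i0) * (U.u r i0 * (star (U.u r i0) * U.u p i0))))
          - (∑ p, h (star (U.u i0 p) * (U.u i0 p * (star (U.u i0 p) * U.u i0 p)))
            * φR (star (U.u p i0) * (U.u p i0 * (star (U.u p i0) * U.u p i0)))) :=
        e.trans (reduce4 _ (fun p q r s hnp => by
          rw [vanish4a U F Δ δc hΔ h hh1 hinv i0 p q r s hnp, zero_mul]))
      have hS1 : (∑ p, ∑ r, h (star (U.u i0 p) * (U.u i0 p * (star (U.u i0 r) * U.u i0 r)))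
            * φR (star (U.u p i0) * (U.u p i0 * (star (U.u r i0) * U.u r i0)))) = α := by
        refine (collapse2 _
          (fun p r => h (star (U.u i0 p) * (U.u i0 p * (star (U.u i0 r) * U.u i0 r))))
          i0 i0 ?_)
        intro p r
        rw [hφRvalA, valA i0 i1 hne p r]
        by_cases hp : p = i0 <;> by_cases hr : r = i0 <;> simp [hp, hr, hne, Ne.symm hne]
      have hS2 : (∑ p, ∑ r, h (star (U.u i0 p) * (U.u i0 r * (star (U.u i0 r) * U.u i0 p)))
            * φR (star (U.u p i0) * (U.u r i0 * (star (U.u r i0) * U.u p i0)))) = α + b2 := by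
        have hsplit : ∀ p r,
            h (star (U.u i0 p) * (U.u i0 r * (star (U.u i0 r) * U.u i0 p)))
              * φR (star (U.u p i0) * (U.u r i0 * (star (U.u r i0) * U.u p i0)))
            = (if r = i0 then if p = i0
                then h (star (U.u i0 p) * (U.u i0 r * (star (U.u i0 r) * U.u i0 p)))
                else 0 else 0)
            + (if r = i1 then if p = i0
                then h (star (U.u i0 p) * (U.u i0 r * (star (U.u i0 r) * U.u i0 p)))
                else 0 else 0) := by
          intro p r
          rw [hφRvalA, valB i0 i1 hne p r]
          by_cases hr0 : r = i0
          · by_cases hp : p = i0 <;> simp [hp, hr0, hne, Ne.symm hne]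
          · by_cases hr1 : r = i1
            · by_cases hp : p = i0 <;> simp [hp, hr0, hr1, hne, Ne.symm hne]
            · by_cases hp : p = i0 <;> simp [hp, hr0, hr1, hne, Ne.symm hne]
        rw [Finset.sum_congr rfl fun p _ => Finset.sum_congr rfl fun r _ => hsplit p r]
        simp only [Finset.sum_add_distrib]
        rw [collapse2 _
          (fun p r => h (star (U.u i0 p) * (U.u i0 r * (star (U.u i0 r) * U.u i0 p))))
          i0 i0 (fun p r => rfl)]
        rw [collapse2 _
          (fun p r => h (star (U.u i0 p) * (U.u i0 r * (star (U.u i0 r) * U.u i0 p))))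
          i0 i1 (fun p r => rfl)]
      have hS3 : (∑ p, h (star (U.u i0 p) * (U.u i0 p * (star (U.u i0 p) * U.u i0 p)))
            * φR (star (U.u p i0) * (U.u p i0 * (star (U.u p i0) * U.u p i0)))) = α := by
        have hterm : ∀ p, h (star (U.u i0 p) * (U.u i0 p * (star (U.u i0 p) * U.u i0 p)))
              * φR (star (U.u p i0) * (U.u p i0 * (star (U.u p i0) * U.u p i0)))
            = if p = i0
                then h (star (U.u i0 p) * (U.u i0 p * (star (U.u i0 p) * U.u i0 p))) else 0 := by
          intro p
          rw [hφRvalA, valA i0 i1 hne p p]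
          by_cases hp : p = i0 <;> simp [hp, hne, Ne.symm hne]
        rw [Finset.sum_congr rfl fun p _ => hterm p,
          Finset.sum_ite_eq' Finset.univ i0
            (fun p => h (star (U.u i0 p) * (U.u i0 p * (star (U.u i0 p) * U.u i0 p))))]
        simp [hαd]
      linear_combination -e3 - hS1 - hS2 + hS3
    -- (I') + φR : α' + 2 a2' = 0
    have hI'R : α' + 2 * a2' = 0 := by
      have e := inv4b U F Δ δc hΔ h φR hh1 hφRstate.1 hconvR i0 i0 i0 i0 i0
      have e3 : α' =
          (∑ p, ∑ r, h (U.u i0 p * (star (U.u i0 p) * (U.u i0 r * star (U.u i0 r))))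
            * φR (U.u p i0 * (star (U.u p i0) * (U.u r i0 * star (U.u r i0)))))
          + (∑ p, ∑ r, h (U.u i0 p * (star (U.u i0 r) * (U.u i0 r * star (U.u i0 p))))
            * φR (U.u p i0 * (star (U.u r i0) * (U.u r i0 * star (U.u p i0)))))
          - (∑ p, h (U.u i0 p * (star (U.u i0 p) * (U.u i0 p * star (U.u i0 p))))
            * φR (U.u p i0 * (star (U.u p i0) * (U.u p i0 * star (U.u p i0))))) :=
        e.trans (reduce4 _ (fun p q r s hnp => by
          rw [vanish4b U F Δ δc hΔ h hh1 hinv i0 p q r s hnp, zero_mul]))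
      have hS1 : (∑ p, ∑ r, h (U.u i0 p * (star (U.u i0 p) * (U.u i0 r * star (U.u i0 r))))
            * φR (U.u p i0 * (star (U.u p i0) * (U.u r i0 * star (U.u r i0)))))
          = 2 * α' + 2 * a2' := by
        have hsplit : ∀ p r,
            h (U.u i0 p * (star (U.u i0 p) * (U.u i0 r * star (U.u i0 r))))
              * φR (U.u p i0 * (star (U.u p i0) * (U.u r i0 * star (U.u r i0))))
            = ((if r = i0 then if p = i0
                then h (U.u i0 p * (star (U.u i0 p) * (U.u i0 r * star (U.u i0 r))))
                else 0 else 0)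
            + (if r = i0 then if p = i1
                then h (U.u i0 p * (star (U.u i0 p) * (U.u i0 r * star (U.u i0 r))))
                else 0 else 0))
            + ((if r = i1 then if p = i0
                then h (U.u i0 p * (star (U.u i0 p) * (U.u i0 r * star (U.u i0 r))))
                else 0 else 0)
            + (if r = i1 then if p = i1
                then h (U.u i0 p * (star (U.u i0 p) * (U.u i0 r * star (U.u i0 r))))
                else 0 else 0)) := by
          intro p r
          rw [hφRvalB, valA' i0 i1 hne p r]
          by_cases hr0 : r = i0
          · by_cases hp0 : p = i0
            · simp [hp0, hr0, hne, Ne.symm hne]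
            · by_cases hp1 : p = i1 <;> simp [hp0, hp1, hr0, hne, Ne.symm hne]
          · by_cases hr1 : r = i1
            · by_cases hp0 : p = i0
              · simp [hp0, hr0, hr1, hne, Ne.symm hne]
              · by_cases hp1 : p = i1 <;> simp [hp0, hp1, hr0, hr1, hne, Ne.symm hne]
            · by_cases hp0 : p = i0 <;> by_cases hp1 : p = i1 <;>
                simp [hp0, hp1, hr0, hr1, hne, Ne.symm hne]
        rw [Finset.sum_congr rfl fun p _ => Finset.sum_congr rfl fun r _ => hsplit p r]
        simp only [Finset.sum_add_distrib]
        rw [collapse2 _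
          (fun p r => h (U.u i0 p * (star (U.u i0 p) * (U.u i0 r * star (U.u i0 r)))))
          i0 i0 (fun p r => rfl)]
        rw [collapse2 _
          (fun p r => h (U.u i0 p * (star (U.u i0 p) * (U.u i0 r * star (U.u i0 r)))))
          i1 i0 (fun p r => rfl)]
        rw [collapse2 _
          (fun p r => h (U.u i0 p * (star (U.u i0 p) * (U.u i0 r * star (U.u i0 r)))))
          i0 i1 (fun p r => rfl)]
        rw [collapse2 _
          (fun p r => h (U.u i0 p * (star (U.u i0 p) * (U.u i0 r * star (U.u i0 r)))))
          i1 i1 (fun p r => rfl)]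
        rw [cB4offA i1 i0 (Ne.symm hne), cB4diag i1]
        ring
      have hS2 : (∑ p, ∑ r, h (U.u i0 p * (star (U.u i0 r) * (U.u i0 r * star (U.u i0 p))))
            * φR (U.u p i0 * (star (U.u r i0) * (U.u r i0 * star (U.u p i0)))))
          = 2 * α' := by
        have hsplit : ∀ p r,
            h (U.u i0 p * (star (U.u i0 r) * (U.u i0 r * star (U.u i0 p))))
              * φR (U.u p i0 * (star (U.u r i0) * (U.u r i0 * star (U.u p i0))))
            = (if r = i0 then if p = i0
                then h (U.u i0 p * (star (U.u i0 r) * (U.u i0 r * star (U.u i0 p))))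
                else 0 else 0)
            + (if r = i1 then if p = i1
                then h (U.u i0 p * (star (U.u i0 r) * (U.u i0 r * star (U.u i0 p))))
                else 0 else 0) := by
          intro p r
          rw [hφRvalB, valB' i0 i1 hne p r]
          by_cases hr0 : r = i0
          · by_cases hp0 : p = i0
            · simp [hp0, hr0, hne, Ne.symm hne]
            · by_cases hp1 : p = i1 <;> simp [hp0, hp1, hr0, hne, Ne.symm hne]
          · by_cases hr1 : r = i1
            · by_cases hp0 : p = i0
              · simp [hp0, hr0, hr1, hne, Ne.symm hne]
              · by_cases hp1 : p = i1 <;> simp [hp0, hp1, hr0, hr1, hne, Ne.symm hne]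
            · by_cases hp0 : p = i0 <;> by_cases hp1 : p = i1 <;>
                simp [hp0, hp1, hr0, hr1, hne, Ne.symm hne]
        rw [Finset.sum_congr rfl fun p _ => Finset.sum_congr rfl fun r _ => hsplit p r]
        simp only [Finset.sum_add_distrib]
        rw [collapse2 _
          (fun p r => h (U.u i0 p * (star (U.u i0 r) * (U.u i0 r * star (U.u i0 p)))))
          i0 i0 (fun p r => rfl)]
        rw [collapse2 _
          (fun p r => h (U.u i0 p * (star (U.u i0 r) * (U.u i0 r * star (U.u i0 p)))))
          i1 i1 (fun p r => rfl)]
        rw [cB4diag i1]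
        ring
      have hS3 : (∑ p, h (U.u i0 p * (star (U.u i0 p) * (U.u i0 p * star (U.u i0 p))))
            * φR (U.u p i0 * (star (U.u p i0) * (U.u p i0 * star (U.u p i0)))))
          = 2 * α' := by
        have hterm : ∀ p, h (U.u i0 p * (star (U.u i0 p) * (U.u i0 p * star (U.u i0 p))))
              * φR (U.u p i0 * (star (U.u p i0) * (U.u p i0 * star (U.u p i0))))
            = (if p = i0
                then h (U.u i0 p * (star (U.u i0 p) * (U.u i0 p * star (U.u i0 p)))) else 0)
            + (if p = i1
                then h (U.u i0 p * (star (U.u i0 p) * (U.u i0 p * star (U.u i0 p)))) else 0) := by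
          intro p
          rw [hφRvalB, valA' i0 i1 hne p p]
          by_cases hp0 : p = i0
          · simp [hp0, hne, Ne.symm hne]
          · by_cases hp1 : p = i1 <;> simp [hp0, hp1, hne, Ne.symm hne]
        rw [Finset.sum_congr rfl fun p _ => hterm p]
        simp only [Finset.sum_add_distrib]
        rw [Finset.sum_ite_eq' Finset.univ i0
          (fun p => h (U.u i0 p * (star (U.u i0 p) * (U.u i0 p * star (U.u i0 p))))),
          Finset.sum_ite_eq' Finset.univ i1
          (fun p => h (U.u i0 p * (star (U.u i0 p) * (U.u i0 p * star (U.u i0 p)))))]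
        simp only [Finset.mem_univ, if_true]
        rw [cB4diag i1]
        ring
      linear_combination -e3 - hS1 - hS2 + hS3
    -- (I) + φS and (I') + φS : α = α'
    have hE3 : α = ((n:ℂ) * (α * α') + (n:ℂ) * ((n:ℂ) - 1) * (a2 * a2'))
        + ((n:ℂ) * (α * α') + (n:ℂ) * ((n:ℂ) - 1) * 0) - (n:ℂ) * (α * α') := by
      have e := inv4a U F Δ δc hΔ h φS hh1 hφSstate.1 hconvS i0 i0 i0 i0 i0
      have e3 : α =
          (∑ p, ∑ r, h (star (U.u i0 p) * (U.u i0 p * (star (U.u i0 r) * U.u i0 r)))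
            * φS (star (U.u p i0) * (U.u p i0 * (star (U.u r i0) * U.u r i0))))
          + (∑ p, ∑ r, h (star (U.u i0 p) * (U.u i0 r * (star (U.u i0 r) * U.u i0 p)))
            * φS (star (U.u p i0) * (U.u r i0 * (star (U.u r i0) * U.u p i0))))
          - (∑ p, h (star (U.u i0 p) * (U.u i0 p * (star (U.u i0 p) * U.u i0 p)))
            * φS (star (U.u p i0) * (U.u p i0 * (star (U.u p i0) * U.u p i0)))) :=
        e.trans (reduce4 _ (fun p q r s hnp => by
          rw [vanish4a U F Δ δc hΔ h hh1 hinv i0 p q r s hnp, zero_mul]))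
      have hS1 : (∑ p, ∑ r, h (star (U.u i0 p) * (U.u i0 p * (star (U.u i0 r) * U.u i0 r)))
            * φS (star (U.u p i0) * (U.u p i0 * (star (U.u r i0) * U.u r i0))))
          = (n:ℂ) * (α * α') + (n:ℂ) * ((n:ℂ) - 1) * (a2 * a2') := by
        rw [Finset.sum_congr rfl fun p _ => Finset.sum_congr rfl fun r _ => by
          rw [hφSvalA p p r r]]
        exact sum_diag_off (by omega) _ (α * α') (a2 * a2')
          (fun p => by rw [cA4diag p, cB4diag p])
          (fun p r hpr => by rw [cA4offA p r hpr, cB4offA p r hpr])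
      have hS2 : (∑ p, ∑ r, h (star (U.u i0 p) * (U.u i0 r * (star (U.u i0 r) * U.u i0 p)))
            * φS (star (U.u p i0) * (U.u r i0 * (star (U.u r i0) * U.u p i0))))
          = (n:ℂ) * (α * α') + (n:ℂ) * ((n:ℂ) - 1) * 0 := by
        rw [Finset.sum_congr rfl fun p _ => Finset.sum_congr rfl fun r _ => by
          rw [hφSvalA p r r p]]
        exact sum_diag_off (by omega) _ (α * α') 0
          (fun p => by rw [cA4diag p, cB4diag p])
          (fun p r hpr => by rw [cA4offB p r hpr, hb2, zero_mul])
      have hS3 : (∑ p, h (star (U.u i0 p) * (U.u i0 p * (star (U.u i0 p) * U.u i0 p)))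
            * φS (star (U.u p i0) * (U.u p i0 * (star (U.u p i0) * U.u p i0))))
          = (n:ℂ) * (α * α') := by
        rw [Finset.sum_congr rfl fun p _ => by
          rw [hφSvalA p p p p, cA4diag p, cB4diag p]]
        rw [Finset.sum_const, Finset.card_univ, Fintype.card_fin, nsmul_eq_mul]
      linear_combination e3 + hS1 + hS2 - hS3
    have hE4 : α' = ((n:ℂ) * (α' * α) + (n:ℂ) * ((n:ℂ) - 1) * (a2' * a2))
        + ((n:ℂ) * (α' * α) + (n:ℂ) * ((n:ℂ) - 1) * 0) - (n:ℂ) * (α' * α) := by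
      have e := inv4b U F Δ δc hΔ h φS hh1 hφSstate.1 hconvS i0 i0 i0 i0 i0
      have e3 : α' =
          (∑ p, ∑ r, h (U.u i0 p * (star (U.u i0 p) * (U.u i0 r * star (U.u i0 r))))
            * φS (U.u p i0 * (star (U.u p i0) * (U.u r i0 * star (U.u r i0)))))
          + (∑ p, ∑ r, h (U.u i0 p * (star (U.u i0 r) * (U.u i0 r * star (U.u i0 p))))
            * φS (U.u p i0 * (star (U.u r i0) * (U.u r i0 * star (U.u p i0)))))
          - (∑ p, h (U.u i0 p * (star (U.u i0 p) * (U.u i0 p * star (U.u i0 p))))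
            * φS (U.u p i0 * (star (U.u p i0) * (U.u p i0 * star (U.u p i0))))) :=
        e.trans (reduce4 _ (fun p q r s hnp => by
          rw [vanish4b U F Δ δc hΔ h hh1 hinv i0 p q r s hnp, zero_mul]))
      have hS1 : (∑ p, ∑ r, h (U.u i0 p * (star (U.u i0 p) * (U.u i0 r * star (U.u i0 r))))
            * φS (U.u p i0 * (star (U.u p i0) * (U.u r i0 * star (U.u r i0)))))
          = (n:ℂ) * (α' * α) + (n:ℂ) * ((n:ℂ) - 1) * (a2' * a2) := by
        rw [Finset.sum_congr rfl fun p _ => Finset.sum_congr rfl fun r _ => by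
          rw [hφSvalB p p r r]]
        exact sum_diag_off (by omega) _ (α' * α) (a2' * a2)
          (fun p => by rw [cB4diag p, cA4diag p])
          (fun p r hpr => by rw [cB4offA p r hpr, cA4offA p r hpr])
      have hS2 : (∑ p, ∑ r, h (U.u i0 p * (star (U.u i0 r) * (U.u i0 r * star (U.u i0 p))))
            * φS (U.u p i0 * (star (U.u r i0) * (U.u r i0 * star (U.u p i0)))))
          = (n:ℂ) * (α' * α) + (n:ℂ) * ((n:ℂ) - 1) * 0 := by
        rw [Finset.sum_congr rfl fun p _ => Finset.sum_congr rfl fun r _ => by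
          rw [hφSvalB p r r p]]
        exact sum_diag_off (by omega) _ (α' * α) 0
          (fun p => by rw [cB4diag p, cA4diag p])
          (fun p r hpr => by rw [cA4offB p r hpr, hb2, mul_zero])
      have hS3 : (∑ p, h (U.u i0 p * (star (U.u i0 p) * (U.u i0 p * star (U.u i0 p))))
            * φS (U.u p i0 * (star (U.u p i0) * (U.u p i0 * star (U.u p i0)))))
          = (n:ℂ) * (α' * α) := by
        rw [Finset.sum_congr rfl fun p _ => by
          rw [hφSvalB p p p p, cB4diag p, cA4diag p]]
        rw [Finset.sum_const, Finset.card_univ, Fintype.card_fin, nsmul_eq_mul]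
      linear_combination e3 + hS1 + hS2 - hS3
    have hαα' : α = α' := by linear_combination hE3 - hE4
    -- Eq1 : α + (n-1) b2 = Lam
    have hEq1 : α + ((n:ℂ) - 1) * b2 = Lam := by
      have e_alg : (∑ k, star (U.u i0 i0) * (U.u i0 k * (star (U.u i0 k) * U.u i0 i0)))
          = star (U.u i0 i0) * U.u i0 i0 := by
        rw [← Finset.mul_sum]
        congr 1
        have e1 : (∑ k, U.u i0 k * (star (U.u i0 k) * U.u i0 i0))
            = (∑ k, U.u i0 k * star (U.u i0 k)) * U.u i0 i0 := by
          rw [Finset.sum_mul]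
          exact Finset.sum_congr rfl fun k _ => (mul_assoc _ _ _).symm
        rw [e1, show (∑ k, U.u i0 k * star (U.u i0 k)) = 1 by
          simpa using U.rel_right i0 i0, one_mul]
      have eEq1 : (∑ k, h (star (U.u i0 i0) * (U.u i0 k * (star (U.u i0 k) * U.u i0 i0))))
          = Lam := by
        rw [← map_sum, e_alg]
      rw [sum_split_one (by omega) _ i0 b2
        (fun k hk => cA4offB i0 k (Ne.symm hk))] at eEq1
      exact eEq1
    -- Eq1' : α' + (n-1) a2' = Mu
    have hEq1' : α' + ((n:ℂ) - 1) * a2' = Mu := by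
      have e_alg : (∑ p, U.u i0 p * (star (U.u i0 p) * (U.u i0 i0 * star (U.u i0 i0))))
          = U.u i0 i0 * star (U.u i0 i0) := by
        have e1 : (∑ p, U.u i0 p * (star (U.u i0 p) * (U.u i0 i0 * star (U.u i0 i0))))
            = (∑ p, U.u i0 p * star (U.u i0 p)) * (U.u i0 i0 * star (U.u i0 i0)) := by
          rw [Finset.sum_mul]
          exact Finset.sum_congr rfl fun p _ => (mul_assoc _ _ _).symm
        rw [e1, show (∑ p, U.u i0 p * star (U.u i0 p)) = 1 by
          simpa using U.rel_right i0 i0, one_mul]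
      have eEq1 : (∑ p, h (U.u i0 p * (star (U.u i0 p) * (U.u i0 i0 * star (U.u i0 i0)))))
          = Mu := by
        rw [← map_sum, e_alg]
      rw [sum_split_one (by omega) _ i0 a2'
        (fun k hk => cB4offA k i0 hk)] at eEq1
      exact eEq1
    -- final contradiction
    have hα : α = Mu := by linear_combination hEq1 + hLam - ((n:ℂ) - 1) * hb2
    have hα' : α' = Mu := by linear_combination hα - hαα'
    have h5 : ((n:ℂ) - 1) * a2' = 0 := by linear_combination hEq1' - hα'
    have h6 : 2 * a2' + Mu = 0 := by linear_combination hI'R - hα'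
    have hn1 : ((n:ℂ) - 1) ≠ 0 := by
      rw [sub_ne_zero]
      exact_mod_cast (by omega : n ≠ 1)
    have ha2' : a2' = 0 := by
      rcases mul_eq_zero.mp h5 with hcon | hok
      · exact absurd hcon hn1
      · exact hok
    have hMu0 : Mu = 0 := by linear_combination h6 - 2 * ha2'
    exact one_ne_zero (by linear_combination -hMu + (n:ℂ) * hMu0 : (1:ℂ) = 0)
  refine ⟨main, ?_⟩
  rintro ⟨h, hstate, hinv⟩
  exact main ⟨h, hstate, fun φ hφ => (hinv φ hφ).2⟩
end
end

section
/- Let n ≥ 2. There is no state h on the Brown algebra U_n^nc such that h ⋆_B φ = h for every tracial state φ on U_n^nc. In particular, there exists neither a boolean Haar state (a state h with φ ⋆_B h = h = h ⋆_B φ for all states φ) nor a boolean Haar trace (a tracial state h with φ ⋆_B h = h = h ⋆_B φ for all tracial states φ) on U⟨n⟩. -/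
noncomputable section

set_option linter.unusedSectionVars false
section Aux
variable {A : Type} [Ring A] [Algebra ℂ A] [StarRing A] [StarModule ℂ A]
variable (F : FreeProd A A) (δc : A →⋆ₐ[ℂ] ℂ) {h φ : A →ₗ[ℂ] ℂ} {Ψ : F.carrier →ₗ[ℂ] ℂ}

lemma bool_inl (hΨ : IsBooleanProdFunctional F δc h φ Ψ) (x : A) (hx : δc x = 0) :
    Ψ (F.inl x) = h x := by
  have := hΨ.2 [Sum.inl x] (by simp) (by simp [List.Chain'])
    (by intro y hy; rw [List.mem_singleton] at hy; subst hy; simpa using hx)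
  simpa [FreeProd.embed] using this

lemma bool_inr (hΨ : IsBooleanProdFunctional F δc h φ Ψ) (x : A) (hx : δc x = 0) :
    Ψ (F.inr x) = φ x := by
  have := hΨ.2 [Sum.inr x] (by simp) (by simp [List.Chain'])
    (by intro y hy; rw [List.mem_singleton] at hy; subst hy; simpa using hx)
  simpa [FreeProd.embed] using this

lemma bool_rl (hΨ : IsBooleanProdFunctional F δc h φ Ψ) (x y : A)
    (hx : δc x = 0) (hy : δc y = 0) :
    Ψ (F.inr x * F.inl y) = φ x * h y := by
  have := hΨ.2 [Sum.inr x, Sum.inl y] (by simp) (by simp [List.Chain'])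
    (by
      intro z hz
      rcases List.mem_cons.mp hz with rfl | hz
      · simpa using hx
      · rw [List.mem_singleton] at hz; subst hz; simpa using hy)
  simpa [FreeProd.embed, mul_assoc] using this

lemma bool_lr (hΨ : IsBooleanProdFunctional F δc h φ Ψ) (x y : A)
    (hx : δc x = 0) (hy : δc y = 0) :
    Ψ (F.inl x * F.inr y) = h x * φ y := by
  have := hΨ.2 [Sum.inl x, Sum.inr y] (by simp) (by simp [List.Chain'])
    (by
      intro z hz
      rcases List.mem_cons.mp hz with rfl | hz
      · simpa using hx
      · rw [List.mem_singleton] at hz; subst hz; simpa using hy)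
  simpa [FreeProd.embed, mul_assoc] using this

lemma bool_rlr (hΨ : IsBooleanProdFunctional F δc h φ Ψ) (x y z : A)
    (hx : δc x = 0) (hy : δc y = 0) (hz : δc z = 0) :
    Ψ (F.inr x * (F.inl y * F.inr z)) = φ x * (h y * φ z) := by
  have := hΨ.2 [Sum.inr x, Sum.inl y, Sum.inr z] (by simp) (by simp [List.Chain'])
    (by
      intro w hw
      rcases List.mem_cons.mp hw with rfl | hw
      · simpa using hx
      rcases List.mem_cons.mp hw with rfl | hw
      · simpa using hy
      · rw [List.mem_singleton] at hw; subst hw; simpa using hz)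
  simpa [FreeProd.embed, mul_assoc] using this

end Aux
set_option linter.unusedSectionVars false
section Aux2
variable {A : Type} [Ring A] [Algebra ℂ A] [StarRing A] [StarModule ℂ A]
variable (F : FreeProd A A) (δc : A →⋆ₐ[ℂ] ℂ) {h φ : A →ₗ[ℂ] ℂ} {Ψ : F.carrier →ₗ[ℂ] ℂ}

lemma psi3 (hΨ : IsBooleanProdFunctional F δc h φ Ψ) (h1 : h 1 = 1) (hφ1 : φ 1 = 1)
    (B Cm D : A) :
    Ψ (F.inr B * (F.inl Cm * F.inr D)) =
      φ B * φ D * h Cm - φ B * φ D * δc Cm + δc Cm * φ (B * D) := by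
  set β := δc B with hβ
  set γ := δc Cm with hγ
  set η := δc D with hη
  set b := B - β • 1 with hbdef
  set c := Cm - γ • 1 with hcdef
  set d := D - η • 1 with hddef
  have hb : δc b = 0 := by simp [hbdef, hβ]
  have hc : δc c = 0 := by simp [hcdef, hγ]
  have hd : δc d = 0 := by simp [hddef, hη]
  have hbd : δc (b * d) = 0 := by rw [map_mul, hb, zero_mul]
  have eB : F.inr B = F.inr b + β • 1 := by
    rw [hbdef, map_sub, map_smul, map_one]; abel
  have eC : F.inl Cm = F.inl c + γ • 1 := by
    rw [hcdef, map_sub, map_smul, map_one]; abel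
  have eD : F.inr D = F.inr d + η • 1 := by
    rw [hddef, map_sub, map_smul, map_one]; abel
  have hv1 : Ψ (F.inr b * (F.inl c * F.inr d)) = φ b * (h c * φ d) := bool_rlr F δc hΨ b c d hb hc hd
  have hv2 : Ψ (F.inr b * F.inl c) = φ b * h c := bool_rl F δc hΨ b c hb hc
  have hv3 : Ψ (F.inl c * F.inr d) = h c * φ d := bool_lr F δc hΨ c d hc hd
  have hv4 : Ψ (F.inr b * F.inr d) = φ (b * d) := by
    rw [← map_mul]; exact bool_inr F δc hΨ _ hbd
  have hv5 : Ψ (F.inr b) = φ b := bool_inr F δc hΨ b hb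
  have hv6 : Ψ (F.inl c) = h c := bool_inl F δc hΨ c hc
  have hv7 : Ψ (F.inr d) = φ d := bool_inr F δc hΨ d hd
  have hΨ1 : Ψ 1 = 1 := hΨ.1
  have expand : F.inr B * (F.inl Cm * F.inr D) =
      F.inr b * (F.inl c * F.inr d) + η • (F.inr b * F.inl c) + γ • (F.inr b * F.inr d)
        + β • (F.inl c * F.inr d) + (γ * η) • F.inr b + (β * η) • F.inl c
        + (β * γ) • F.inr d + (β * (γ * η)) • (1 : F.carrier) := by
    rw [eB, eC, eD]
    simp only [mul_add, add_mul, smul_mul_assoc, mul_smul_comm, smul_smul, one_mul, mul_one]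
    module
  rw [expand]
  simp only [map_add, map_smul, hv1, hv2, hv3, hv4, hv5, hv6, hv7, hΨ1, smul_eq_mul]
  have fb : φ b = φ B - β := by rw [hbdef, map_sub, map_smul, smul_eq_mul, hφ1, mul_one]
  have fd : φ d = φ D - η := by rw [hddef, map_sub, map_smul, smul_eq_mul, hφ1, mul_one]
  have hcc : h c = h Cm - γ := by rw [hcdef, map_sub, map_smul, smul_eq_mul, h1, mul_one]
  have fbd : φ (b * d) = φ (B * D) - η * φ B - β * φ D + β * η := by
    have : b * d = B * D - η • B - β • D + (β * η) • 1 := by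
      rw [hbdef, hddef]
      simp only [sub_mul, mul_sub, smul_mul_assoc, mul_smul_comm, smul_smul, one_mul, mul_one]
      module
    rw [this]
    simp only [map_add, map_sub, map_smul, smul_eq_mul, hφ1, mul_one]
  rw [fb, fd, hcc, fbd]
  ring
end Aux2

section Helpers

theorem trace_std {n : ℕ} (a b : Fin n) :
    Matrix.trace (Matrix.single a b (1:ℂ)) = if a = b then 1 else 0 := by
  have h : ∀ x : Fin n, (a = x ∧ b = x) ↔ (a = b ∧ a = x) := by
    intro x; constructor
    · rintro ⟨rfl, rfl⟩; exact ⟨rfl, rfl⟩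
    · rintro ⟨rfl, rfl⟩; exact ⟨rfl, rfl⟩
  simp only [Matrix.trace, Matrix.diag, Matrix.single, Matrix.of_apply]
  simp only [h]
  rcases eq_or_ne a b with rfl | hab
  · simp [Finset.sum_ite_eq', eq_comm]
  · simp [hab]

theorem star_std {n : ℕ} (a b : Fin n) :
    star (Matrix.single a b (1:ℂ)) = Matrix.single b a 1 := by
  ext x y
  simp [Matrix.single, Matrix.conjTranspose_apply, and_comm]

theorem matrel1 (n : ℕ) : ∀ i j : Fin n,
    (∑ k, star (Matrix.single i k (1:ℂ)) * Matrix.single j k 1) =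
      if i = j then (1 : Matrix (Fin n) (Fin n) ℂ) else 0 := by
  intro i j
  simp only [star_std]
  rcases eq_or_ne i j with rfl | hij
  · simp only [Matrix.single_mul_single_same, one_mul, if_pos rfl]
    ext x y
    have h : ∀ z : Fin n, (z = x ∧ z = y) ↔ (x = y ∧ z = x) := by
      intro z; constructor
      · rintro ⟨rfl, rfl⟩; exact ⟨rfl, rfl⟩
      · rintro ⟨rfl, rfl⟩; exact ⟨rfl, rfl⟩
    simp only [Matrix.sum_apply, Matrix.single, Matrix.of_apply, Matrix.one_apply, ← ite_and]
    simp only [h]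
    rcases eq_or_ne x y with rfl | hxy
    · simp [Finset.sum_ite_eq', eq_comm]
    · simp [hxy]
  · rw [if_neg hij]
    have h : ∀ k : Fin n, Matrix.single k i (1:ℂ) * Matrix.single j k 1 = 0 :=
      fun k => Matrix.single_mul_single_of_ne (c := 1) k i j hij 1
    simp [h]

theorem matrel2 (n : ℕ) : ∀ i j : Fin n,
    (∑ k, Matrix.single k i (1:ℂ) * star (Matrix.single k j (1:ℂ))) =
      if i = j then (1 : Matrix (Fin n) (Fin n) ℂ) else 0 := by
  intro i j
  simp only [star_std]
  rcases eq_or_ne i j with rfl | hij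
  · simp only [Matrix.single_mul_single_same, one_mul, if_pos rfl]
    ext x y
    have h : ∀ z : Fin n, (z = x ∧ z = y) ↔ (x = y ∧ z = x) := by
      intro z; constructor
      · rintro ⟨rfl, rfl⟩; exact ⟨rfl, rfl⟩
      · rintro ⟨rfl, rfl⟩; exact ⟨rfl, rfl⟩
    simp only [Matrix.sum_apply, Matrix.single, Matrix.of_apply, Matrix.one_apply, ← ite_and]
    simp only [h]
    rcases eq_or_ne x y with rfl | hxy
    · simp [Finset.sum_ite_eq', eq_comm]
    · simp [hxy]
  · rw [if_neg hij]
    have h : ∀ k : Fin n, Matrix.single k i (1:ℂ) * Matrix.single j k 1 = 0 :=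
      fun k => Matrix.single_mul_single_of_ne (c := 1) k i j hij 1
    simp [h]

theorem charrel1 {n : ℕ} (σ : Equiv.Perm (Fin n)) : ∀ i j : Fin n,
    (∑ k, star (if (k : Fin n) = σ i then (1:ℂ) else 0) * (if k = σ j then 1 else 0)) =
      if i = j then 1 else 0 := by
  intro i j
  simp only [apply_ite (star : ℂ → ℂ), star_one, star_zero, ite_mul, one_mul, zero_mul,
    mul_ite, mul_one, mul_zero, ← ite_and]
  have hc : ∀ x : Fin n, (x = σ j ∧ x = σ i) ↔ (i = j ∧ x = σ i) := by
    intro x; constructor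
    · rintro ⟨rfl, h⟩; exact ⟨σ.injective (h.symm : σ i = σ j), h⟩
    · rintro ⟨rfl, rfl⟩; exact ⟨rfl, rfl⟩
  simp only [hc]
  rcases eq_or_ne i j with rfl | hij
  · simp [Finset.sum_ite_eq']
  · simp [hij]

theorem charrel2 {n : ℕ} (σ : Equiv.Perm (Fin n)) : ∀ i j : Fin n,
    (∑ k : Fin n, (if (i : Fin n) = σ k then (1:ℂ) else 0) * star (if j = σ k then (1:ℂ) else 0)) =
      if i = j then 1 else 0 := by
  intro i j
  simp only [apply_ite (star : ℂ → ℂ), star_one, star_zero, ite_mul, one_mul, zero_mul,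
    mul_ite, mul_one, mul_zero, ← ite_and]
  have hc : ∀ x : Fin n, (j = σ x ∧ i = σ x) ↔ (i = j ∧ x = σ.symm i) := by
    intro x; constructor
    · rintro ⟨rfl, h⟩; exact ⟨h, by rw [h]; simp⟩
    · rintro ⟨rfl, rfl⟩; simp
  simp only [hc]
  rcases eq_or_ne i j with rfl | hij
  · simp [Finset.sum_ite_eq']
  · simp [hij]

end Helpers

section MasterEq
set_option linter.unusedSectionVars false

variable {n : ℕ} (U : BrownAlg n) (F : FreeProd U.carrier U.carrier)

theorem delta_expand (Δ : U.carrier →⋆ₐ[ℂ] F.carrier) (hΔ : U.IsCoprod F Δ) (i₀ j l : Fin n) :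
    Δ (star (U.u i₀ j) * U.u i₀ l) =
      ∑ p, ∑ q, F.inr (star (U.u p j)) *
        (F.inl (star (U.u i₀ p) * U.u i₀ q) * F.inr (U.u q l)) := by
  rw [map_mul, map_star, hΔ i₀ j, hΔ i₀ l, star_sum]
  have hterm : ∀ p : Fin n, star (F.inl (U.u i₀ p) * F.inr (U.u p j)) =
      F.inr (star (U.u p j)) * F.inl (star (U.u i₀ p)) := by
    intro p; rw [star_mul, ← map_star, ← map_star]
  simp only [hterm]
  rw [Finset.sum_mul_sum]
  refine Finset.sum_congr rfl fun p _ => Finset.sum_congr rfl fun q _ => ?_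
  rw [mul_assoc, ← mul_assoc (F.inl (star (U.u i₀ p))), ← map_mul]

theorem master_eq (Δ : U.carrier →⋆ₐ[ℂ] F.carrier) (hΔ : U.IsCoprod F Δ)
    (δc : U.carrier →⋆ₐ[ℂ] ℂ) (hδ : U.IsCounit δc)
    {h φ : U.carrier →ₗ[ℂ] ℂ} {Ψ : F.carrier →ₗ[ℂ] ℂ}
    (hΨ : IsBooleanProdFunctional F δc h φ Ψ) (hΨΔ : ∀ a, Ψ (Δ a) = h a)
    (h1 : h 1 = 1) (hφ1 : φ 1 = 1) (i₀ j l : Fin n) :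
    h (star (U.u i₀ j) * U.u i₀ l) =
      (∑ p, ∑ q, φ (star (U.u p j)) * φ (U.u q l) * h (star (U.u i₀ p) * U.u i₀ q))
        - φ (star (U.u i₀ j)) * φ (U.u i₀ l) + φ (star (U.u i₀ j) * U.u i₀ l) := by
  have hδs : ∀ a b : Fin n, δc (star (U.u a b)) = if a = b then (1:ℂ) else 0 := by
    intro a b; rw [map_star, hδ]
    rcases eq_or_ne a b with rfl | hab
    · simp
    · simp [hab]
  have hγ : ∀ p q : Fin n, δc (star (U.u i₀ p) * U.u i₀ q) =
      (if i₀ = p then (1:ℂ) else 0) * (if i₀ = q then 1 else 0) := by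
    intro p q; rw [map_mul, hδs, hδ]
  have step : h (star (U.u i₀ j) * U.u i₀ l) =
      ∑ p, ∑ q, Ψ (F.inr (star (U.u p j)) *
        (F.inl (star (U.u i₀ p) * U.u i₀ q) * F.inr (U.u q l))) := by
    rw [← hΨΔ, delta_expand U F Δ hΔ i₀ j l, map_sum]
    simp only [map_sum]
  rw [step]
  have hterm : ∀ p q : Fin n,
      Ψ (F.inr (star (U.u p j)) * (F.inl (star (U.u i₀ p) * U.u i₀ q) * F.inr (U.u q l))) =
        φ (star (U.u p j)) * φ (U.u q l) * h (star (U.u i₀ p) * U.u i₀ q)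
          - φ (star (U.u p j)) * φ (U.u q l) *
              ((if i₀ = p then (1:ℂ) else 0) * (if i₀ = q then 1 else 0))
          + ((if i₀ = p then (1:ℂ) else 0) * (if i₀ = q then 1 else 0)) *
              φ (star (U.u p j) * U.u q l) := by
    intro p q
    rw [psi3 F δc hΨ h1 hφ1, hγ]
  simp only [hterm]
  simp only [Finset.sum_add_distrib, Finset.sum_sub_distrib]
  congr 1
  · congr 1
    have hB : ∀ p q : Fin n,
        φ (star (U.u p j)) * φ (U.u q l) *
            ((if i₀ = p then (1:ℂ) else 0) * (if i₀ = q then 1 else 0)) =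
          if i₀ = q then (if i₀ = p then φ (star (U.u p j)) * φ (U.u q l) else 0) else 0 := by
      intro p q; split_ifs <;> ring
    simp only [hB, Finset.sum_ite_eq, Finset.mem_univ, if_true]
  · have hC : ∀ p q : Fin n,
        ((if i₀ = p then (1:ℂ) else 0) * (if i₀ = q then 1 else 0)) *
            φ (star (U.u p j) * U.u q l) =
          if i₀ = q then (if i₀ = p then φ (star (U.u p j) * U.u q l) else 0) else 0 := by
      intro p q; split_ifs <;> ring
    simp only [hC, Finset.sum_ite_eq, Finset.mem_univ, if_true]

end MasterEq

section Core
set_option linter.unusedSectionVars false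
set_option maxHeartbeats 1000000

theorem no_haar_core (n : ℕ) (hn : 2 ≤ n) (U : BrownAlg n)
    (F : FreeProd U.carrier U.carrier) (Δ : U.carrier →⋆ₐ[ℂ] F.carrier)
    (hΔ : U.IsCoprod F Δ) (δc : U.carrier →⋆ₐ[ℂ] ℂ) (hδ : U.IsCounit δc) :
    ¬ ∃ h : U.carrier →ₗ[ℂ] ℂ, IsState h ∧
        ∀ φ : U.carrier →ₗ[ℂ] ℂ, IsTracialState φ → U.BooleanConv F Δ δc h φ h := by
  rintro ⟨h, hstate, hhaar⟩
  have h1 : h 1 = 1 := hstate.1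
  have hn0 : (n : ℂ) ≠ 0 := Nat.cast_ne_zero.mpr (by omega)
  set i₀ : Fin n := ⟨0, by omega⟩ with hi₀
  set i₁ : Fin n := ⟨1, by omega⟩ with hi₁
  have hi01 : i₀ ≠ i₁ := by simp [hi₀, hi₁, Fin.ext_iff]
  set c : ℂ := (n : ℂ)⁻¹ with hc
  have hcne : c ≠ 0 := inv_ne_zero hn0
  -- the tracial state coming from the fundamental matrix representation
  obtain ⟨π₁, hπ₁, -⟩ := U.universal (Matrix (Fin n) (Fin n) ℂ)
      (fun a b => Matrix.single b a 1) (matrel1 n) (matrel2 n)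
  set φ₁ : U.carrier →ₗ[ℂ] ℂ :=
    c • ((Matrix.traceLinearMap (Fin n) ℂ ℂ) ∘ₗ π₁.toAlgHom.toLinearMap) with hφ₁def
  have hφ₁x : ∀ x, φ₁ x = c * Matrix.trace (π₁ x) := by
    intro x
    simp [hφ₁def, smul_eq_mul]
  have hφ₁1 : φ₁ 1 = 1 := by
    rw [hφ₁x, map_one, Matrix.trace_one]
    simp only [Fintype.card_fin, hc]
    exact inv_mul_cancel₀ hn0
  have hφ₁ts : IsTracialState φ₁ := by
    refine ⟨⟨hφ₁1, ?_⟩, ?_⟩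
    · intro a
      have hval : φ₁ (star a * a) =
          ((((n:ℝ)⁻¹ * ∑ i, ∑ j, Complex.normSq (π₁ a j i)) : ℝ) : ℂ) := by
        rw [hφ₁x, map_mul, map_star]
        have htr : Matrix.trace (star (π₁ a) * π₁ a) =
            ((∑ i, ∑ j, Complex.normSq (π₁ a j i) : ℝ) : ℂ) := by
          push_cast
          rw [Matrix.trace]
          simp only [Matrix.diag_apply, Matrix.mul_apply, Matrix.star_apply]
          refine Finset.sum_congr rfl fun i _ => Finset.sum_congr rfl fun j _ => ?_
          rw [Complex.star_def, ← Complex.normSq_eq_conj_mul_self]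
        rw [htr, hc]
        push_cast
        ring
      rw [hval]
      constructor
      · rw [Complex.ofReal_re]
        have h2 : (0:ℝ) ≤ ∑ i, ∑ j, Complex.normSq (π₁ a j i) :=
          Finset.sum_nonneg fun i _ => Finset.sum_nonneg fun j _ => Complex.normSq_nonneg _
        positivity
      · rw [Complex.ofReal_im]
    · intro a b
      rw [hφ₁x, hφ₁x, map_mul, map_mul, Matrix.trace_mul_comm]
  have v1 : ∀ p j : Fin n, φ₁ (star (U.u p j)) = if p = j then c else 0 := by
    intro p j
    rw [hφ₁x, map_star, hπ₁, star_std, trace_std]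
    split_ifs <;> ring
  have v2 : ∀ q l : Fin n, φ₁ (U.u q l) = if l = q then c else 0 := by
    intro q l
    rw [hφ₁x, hπ₁, trace_std]
    split_ifs <;> ring
  have v3 : ∀ j l : Fin n, φ₁ (star (U.u i₀ j) * U.u i₀ l) = if j = l then c else 0 := by
    intro j l
    rw [hφ₁x, map_mul, map_star, hπ₁, hπ₁, star_std]
    rcases eq_or_ne j l with rfl | hjl
    · rw [Matrix.single_mul_single_same, one_mul, trace_std]
      simp
    · rw [Matrix.single_mul_single_of_ne (h := hjl), Matrix.trace_zero, if_neg hjl, mul_zero]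
  obtain ⟨Ψ₁, hΨ₁, hΨ₁Δ⟩ := hhaar φ₁ hφ₁ts
  have EJ : ∀ j : Fin n, h (star (U.u i₀ j) * U.u i₀ j) =
      c * c * h (star (U.u i₀ j) * U.u i₀ j)
        - (if i₀ = j then c else 0) * (if j = i₀ then c else 0) + c := by
    intro j
    have hme := master_eq U F Δ hΔ δc hδ hΨ₁ hΨ₁Δ h1 hφ₁1 i₀ j j
    refine hme.trans ?_
    simp only [v1, v2]
    rw [v3, if_pos rfl]
    congr 1
    congr 1
    have hA : ∀ p q : Fin n,
        (if p = j then c else 0) * (if j = q then c else 0) * h (star (U.u i₀ p) * U.u i₀ q) =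
          if j = q then (if p = j then c * c * h (star (U.u i₀ p) * U.u i₀ q) else 0) else 0 := by
      intro p q; split_ifs <;> ring
    simp only [hA, Finset.sum_ite_eq, Finset.mem_univ, if_true, Finset.sum_ite_eq']
  -- the tracial state coming from the swap character
  set σ : Equiv.Perm (Fin n) := Equiv.swap i₀ i₁ with hσ
  obtain ⟨π₂, hπ₂, -⟩ := U.universal ℂ
      (fun a b => if a = σ b then 1 else 0) (charrel1 σ) (charrel2 σ)
  set φ₂ : U.carrier →ₗ[ℂ] ℂ := π₂.toAlgHom.toLinearMap with hφ₂def
  have hφ₂x : ∀ x, φ₂ x = π₂ x := fun x => rfl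
  have hφ₂1 : φ₂ 1 = 1 := by rw [hφ₂x, map_one]
  have hφ₂ts : IsTracialState φ₂ := by
    refine ⟨⟨hφ₂1, ?_⟩, ?_⟩
    · intro a
      rw [hφ₂x, map_mul, map_star, Complex.star_def, ← Complex.normSq_eq_conj_mul_self]
      constructor
      · rw [Complex.ofReal_re]; exact Complex.normSq_nonneg _
      · rw [Complex.ofReal_im]
    · intro a b
      rw [hφ₂x, hφ₂x, map_mul, map_mul, mul_comm]
  have hσ0 : σ i₀ = i₁ := Equiv.swap_apply_left i₀ i₁
  have w1 : ∀ p : Fin n, φ₂ (star (U.u p i₀)) = if p = i₁ then 1 else 0 := by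
    intro p
    rw [hφ₂x, map_star, hπ₂, hσ0]
    split_ifs <;> simp
  have w2 : ∀ q : Fin n, φ₂ (U.u q i₀) = if q = i₁ then 1 else 0 := by
    intro q
    rw [hφ₂x, hπ₂, hσ0]
  have w3 : φ₂ (star (U.u i₀ i₀) * U.u i₀ i₀) = 0 := by
    rw [hφ₂x, map_mul, map_star, hπ₂, hσ0, if_neg hi01]
    simp
  obtain ⟨Ψ₂, hΨ₂, hΨ₂Δ⟩ := hhaar φ₂ hφ₂ts
  have E3 : h (star (U.u i₀ i₀) * U.u i₀ i₀) = h (star (U.u i₀ i₁) * U.u i₀ i₁) := by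
    have hme := master_eq U F Δ hΔ δc hδ hΨ₂ hΨ₂Δ h1 hφ₂1 i₀ i₀ i₀
    refine hme.trans ?_
    rw [w3]
    simp only [w1, w2, if_neg hi01]
    have hA : ∀ p q : Fin n,
        (if p = i₁ then (1:ℂ) else 0) * (if q = i₁ then 1 else 0) *
            h (star (U.u i₀ p) * U.u i₀ q) =
          if q = i₁ then (if p = i₁ then h (star (U.u i₀ p) * U.u i₀ q) else 0) else 0 := by
      intro p q; split_ifs <;> ring
    simp only [hA, Finset.sum_ite_eq', Finset.mem_univ, if_true]
    ring
  -- the contradiction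
  have E1 := EJ i₀
  have E2 := EJ i₁
  rw [if_pos rfl] at E1
  rw [if_neg hi01, if_neg (Ne.symm hi01), zero_mul] at E2
  rw [E3] at E1
  have hc2 : c * c = 0 := by linear_combination E1 - E2
  exact hcne (mul_self_eq_zero.mp hc2)

end Core

/-- For `n ≥ 2` there is no state `h` on the Brown algebra with
`h ⋆_B φ = h` for every tracial state `φ`; in particular there is neither a boolean
Haar state nor a boolean Haar trace on `U⟨n⟩`. -/
theorem no_boolean_haar_state (n : ℕ) (hn : 2 ≤ n) (U : BrownAlg n)
    (F : FreeProd U.carrier U.carrier) (Δ : U.carrier →⋆ₐ[ℂ] F.carrier)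
    (hΔ : U.IsCoprod F Δ) (δc : U.carrier →⋆ₐ[ℂ] ℂ) (hδ : U.IsCounit δc) :
    (¬ ∃ h : U.carrier →ₗ[ℂ] ℂ, IsState h ∧
        ∀ φ : U.carrier →ₗ[ℂ] ℂ, IsTracialState φ → U.BooleanConv F Δ δc h φ h) ∧
    (¬ ∃ h : U.carrier →ₗ[ℂ] ℂ, IsState h ∧
        ∀ φ : U.carrier →ₗ[ℂ] ℂ, IsState φ →
          U.BooleanConv F Δ δc φ h h ∧ U.BooleanConv F Δ δc h φ h) ∧
    (¬ ∃ h : U.carrier →ₗ[ℂ] ℂ, IsTracialState h ∧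
        ∀ φ : U.carrier →ₗ[ℂ] ℂ, IsTracialState φ →
          U.BooleanConv F Δ δc φ h h ∧ U.BooleanConv F Δ δc h φ h) := by
  refine ⟨no_haar_core n hn U F Δ hΔ δc hδ, ?_, ?_⟩
  · rintro ⟨h, hs, hp⟩
    exact no_haar_core n hn U F Δ hΔ δc hδ ⟨h, hs, fun φ hφ => (hp φ hφ.1).2⟩
  · rintro ⟨h, hs, hp⟩
    exact no_haar_core n hn U F Δ hΔ δc hδ ⟨h, hs.1, fun φ hφ => (hp φ hφ).2⟩
end
end
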